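/- arXiv:1704.06745 — 12 statements merged into one kernel-verified Lean document; each statement's English description precedes it below -/
import Mathlib

section
/- Let λ1 ≥ λ2 ≥ λ3 > 0 > λ4 ≥ λ5 ≥ −λ1 be real numbers with λ1 + λ2 + λ3 + λ4 + λ5 = 0 and λ1 + λ2 + λ4 + λ5 < 0. Then there exists a 5×5 nonnegative bisymmetric real matrix whose spectrum is λ1, λ2, λ3, λ4, λ5 if and only if λ1³ + λ2³ + λ3³ + λ4³ + λ5³ ≥ 0. -/
open Matrix Polynomial

/-- The 5×5 reverse identity (exchange) matrix. -/
def J5 : Matrix (Fin 5) (Fin 5) ℝ :=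
  Matrix.of fun i j => if (i : ℕ) + (j : ℕ) = 4 then 1 else 0

section Aux

lemma aux_charpoly_conj {n : Type*} [Fintype n] [DecidableEq n] {R : Type*} [CommRing R]
    (P B Pi : Matrix n n R) (h1 : P * Pi = 1) :
    (P * B * Pi).charpoly = B.charpoly := by
  unfold Matrix.charpoly
  have hPPi : (P.map (C : R →+* R[X])) * (Pi.map C) = 1 := by
    have := congrArg (fun M => M.map (C : R →+* R[X])) h1
    simpa [Matrix.map_mul] using this
  have hm : charmatrix (P * B * Pi) = (P.map C) * charmatrix B * (Pi.map C) := by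
    unfold charmatrix
    have hs : (P.map C) * Matrix.scalar n (X : R[X]) * (Pi.map C) = Matrix.scalar n (X : R[X]) := by
      rw [Matrix.scalar_apply, ← Matrix.smul_one_eq_diagonal, Matrix.mul_smul, Matrix.mul_one,
        Matrix.smul_mul, hPPi]
    rw [Matrix.mul_sub, Matrix.sub_mul, hs]
    congr 1
    simp [RingHom.mapMatrix_apply, Matrix.map_mul]
  rw [hm, Matrix.det_mul, Matrix.det_mul]
  have hd : (P.map (C : R →+* R[X])).det * (Pi.map C).det = 1 := by
    rw [← Matrix.det_mul, hPPi]
    simp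
  calc (P.map (C : R →+* R[X])).det * (charmatrix B).det * (Pi.map C).det
      = (P.map (C : R →+* R[X])).det * (Pi.map C).det * (charmatrix B).det := by ring
    _ = (charmatrix B).det := by rw [hd, one_mul]

lemma aux_charpoly_diag {n : Type*} [Fintype n] [DecidableEq n] {R : Type*} [CommRing R]
    (d : n → R) : (Matrix.diagonal d).charpoly = ∏ i, (X - C (d i)) := by
  unfold Matrix.charpoly charmatrix
  have : Matrix.scalar n (X : R[X]) - (C : R →+* R[X]).mapMatrix (Matrix.diagonal d)
      = Matrix.diagonal (fun i => X - C (d i)) := by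
    ext i j
    by_cases h : i = j <;> simp [h, Matrix.scalar_apply, Matrix.diagonal_apply]
  rw [this, Matrix.det_diagonal]

noncomputable def auxP : Matrix (Fin 5) (Fin 5) ℝ :=
  !![1,0,0,1,0; 0,1,0,0,1; 0,0,1,0,0; 0,1,0,0,-1; 1,0,0,-1,0]

noncomputable def auxPinv : Matrix (Fin 5) (Fin 5) ℝ :=
  !![1/2,0,0,0,1/2; 0,1/2,0,1/2,0; 0,0,1,0,0; 1/2,0,0,0,-1/2; 0,1/2,0,-1/2,0]

lemma auxP_mul_auxPinv : auxP * auxPinv = 1 := by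
  ext i j
  fin_cases i <;> fin_cases j <;>
    simp [auxP, auxPinv, Matrix.mul_apply, Fin.sum_univ_five, Matrix.one_apply,
      Matrix.vecHead, Matrix.vecTail] <;> norm_num

lemma aux_charpoly3 (c r u v : ℝ) :
    (!![c, r, u; r, 0, v; 2*u, 2*v, 0] : Matrix (Fin 3) (Fin 3) ℝ).charpoly
      = X^3 - C c * X^2 - C (r^2 + 2*u^2 + 2*v^2) * X - C (4*r*u*v - 2*c*v^2) := by
  unfold Matrix.charpoly
  rw [Matrix.det_fin_three]
  simp (config := { decide := true }) only [_root_.map_add, _root_.map_mul, _root_.map_sub,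
    Polynomial.C_0, map_pow, map_ofNat, Matrix.charmatrix_apply, Matrix.diagonal_apply,
    Matrix.cons_val', Matrix.cons_val_zero, Matrix.cons_val_one, Matrix.head_cons,
    Matrix.empty_val', Matrix.cons_val_fin_one, Matrix.head_fin_const, Matrix.cons_val_two,
    Matrix.tail_cons, Matrix.of_apply, if_true, if_false]
  ring

lemma aux_charpoly2 (c r : ℝ) :
    (!![-c, r; r, 0] : Matrix (Fin 2) (Fin 2) ℝ).charpoly = X^2 + C c * X - C (r^2) := by
  unfold Matrix.charpoly
  rw [Matrix.det_fin_two]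
  simp (config := { decide := true }) only [_root_.map_add, _root_.map_mul, _root_.map_sub,
    Polynomial.C_0, map_pow, map_neg, map_ofNat, Matrix.charmatrix_apply, Matrix.diagonal_apply,
    Matrix.cons_val', Matrix.cons_val_zero, Matrix.cons_val_one, Matrix.head_cons,
    Matrix.empty_val', Matrix.cons_val_fin_one, Matrix.head_fin_const, Matrix.of_apply,
    if_true, if_false]
  ring

lemma aux_block_eq (c r u v : ℝ) :
    (Matrix.reindex finSumFinEquiv finSumFinEquiv
      (Matrix.fromBlocks (!![c, r, u; r, 0, v; 2*u, 2*v, 0]) 0 0 (!![-c, r; r, 0]))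
        : Matrix (Fin 5) (Fin 5) ℝ)
    = !![c,r,u,0,0; r,0,v,0,0; 2*u,2*v,0,0,0; 0,0,0,-c,r; 0,0,0,r,0] := by
  ext i j
  fin_cases i <;> fin_cases j <;> rfl

set_option maxHeartbeats 1600000 in
lemma aux_Q_decomp (c r u v : ℝ) :
    (Matrix.of ![![0, r, u, 0, c], ![r, 0, v, 0, 0], ![u, v, 0, v, u],
        ![0, 0, v, 0, r], ![c, 0, u, r, 0]] : Matrix (Fin 5) (Fin 5) ℝ)
      = auxP * !![c,r,u,0,0; r,0,v,0,0; 2*u,2*v,0,0,0; 0,0,0,-c,r; 0,0,0,r,0] * auxPinv := by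
  ext i j
  fin_cases i <;> fin_cases j <;>
    simp [auxP, auxPinv, Matrix.mul_apply, Fin.sum_univ_five, Matrix.vecHead,
      Matrix.vecTail] <;> ring

lemma aux_Q_charpoly (c r u v : ℝ) :
    (Matrix.of ![![0, r, u, 0, c], ![r, 0, v, 0, 0], ![u, v, 0, v, u],
        ![0, 0, v, 0, r], ![c, 0, u, r, 0]] : Matrix (Fin 5) (Fin 5) ℝ).charpoly
      = (X^3 - C c * X^2 - C (r^2 + 2*u^2 + 2*v^2) * X - C (4*r*u*v - 2*c*v^2))
        * (X^2 + C c * X - C (r^2)) := by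
  rw [aux_Q_decomp, aux_charpoly_conj _ _ _ auxP_mul_auxPinv, ← aux_block_eq,
    Matrix.charpoly_reindex, Matrix.charpoly_fromBlocks_zero₁₂, aux_charpoly3, aux_charpoly2]

lemma aux_factor3 (a b d e f g : ℝ) (h1 : a = e + f + g) (h2 : b = -(e*f + e*g + f*g))
    (h3 : d = e*f*g) :
    (X:ℝ[X])^3 - C a * X^2 - C b * X - C d = (X - C e) * (X - C f) * (X - C g) := by
  subst h1; subst h2; subst h3
  simp only [_root_.map_add, _root_.map_mul, map_neg]
  ring

lemma aux_factor2 (a b e f : ℝ) (ha : a = -(e + f)) (hb : b = -(e*f)) :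
    (X:ℝ[X])^2 + C a * X - C b = (X - C e) * (X - C f) := by
  subst ha; subst hb
  simp only [_root_.map_add, _root_.map_mul, map_neg]
  ring

end Aux

set_option maxHeartbeats 2000000 in
theorem stmt_1 (l1 l2 l3 l4 l5 : ℝ)
    (h12 : l1 ≥ l2) (h23 : l2 ≥ l3) (h3 : l3 > 0) (h4 : 0 > l4) (h45 : l4 ≥ l5)
    (h5 : l5 ≥ -l1)
    (hsum : l1 + l2 + l3 + l4 + l5 = 0)
    (hneg : l1 + l2 + l4 + l5 < 0) :
    (∃ Q : Matrix (Fin 5) (Fin 5) ℝ,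
        (∀ i j, 0 ≤ Q i j) ∧ Q = Qᵀ ∧ Q * J5 = J5 * Q ∧
        Q.charpoly = (X - C l1) * (X - C l2) * (X - C l3) * (X - C l4) * (X - C l5))
    ↔ l1 ^ 3 + l2 ^ 3 + l3 ^ 3 + l4 ^ 3 + l5 ^ 3 ≥ 0 := by
  have hl1 : 0 < l1 := lt_of_lt_of_le h3 (le_trans h23 h12)
  have hl2 : 0 < l2 := lt_of_lt_of_le h3 h23
  have hl5 : l5 < 0 := lt_of_le_of_lt h45 h4
  constructor
  · -- Q exists → sum of cubes nonneg
    rintro ⟨Q, hnn, hsymQ, -, hcp⟩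
    have hH : Q.IsHermitian := by
      rw [Matrix.IsHermitian, Matrix.conjTranspose_eq_transpose_of_trivial]
      exact hsymQ.symm
    set U : Matrix (Fin 5) (Fin 5) ℝ := (hH.eigenvectorUnitary : Matrix (Fin 5) (Fin 5) ℝ)
      with hUdef
    set μ : Fin 5 → ℝ := hH.eigenvalues with hmu
    have hU1 : U * star U = 1 := (Matrix.mem_unitaryGroup_iff).mp hH.eigenvectorUnitary.2
    have hU2 : star U * U = 1 := (Matrix.mem_unitaryGroup_iff').mp hH.eigenvectorUnitary.2
    have hspec : Q = U * Matrix.diagonal μ * star U := by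
      have := hH.spectral_theorem
      rwa [RCLike.ofReal_real_eq_id, Function.id_comp] at this
    -- charpoly of Q via eigenvalues
    have hcpμ : Q.charpoly = ∏ i, (X - C (μ i)) := by
      rw [hspec, aux_charpoly_conj _ _ _ hU1, aux_charpoly_diag]
    have hprod : ∏ i, (X - C (μ i))
        = (X - C l1) * (X - C l2) * (X - C l3) * (X - C l4) * (X - C l5) := by
      rw [← hcpμ, hcp]
    -- multiset of eigenvalues
    have hms : (Finset.univ.val.map μ) = ({l1, l2, l3, l4, l5} : Multiset ℝ) := by
      have h1 : ((Finset.univ.val.map μ).map (fun a => X - C a)).prod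
          = (({l1, l2, l3, l4, l5} : Multiset ℝ).map (fun a => X - C a)).prod := by
        rw [Multiset.map_map]
        have hL : ((Finset.univ.val.map (fun i => X - C (μ i))).prod : ℝ[X])
            = ∏ i, (X - C (μ i)) := rfl
        rw [show ((fun a => X - C a) ∘ μ) = fun i => X - C (μ i) from rfl, hL, hprod]
        simp only [Multiset.insert_eq_cons, Multiset.map_cons, Multiset.prod_cons,
          Multiset.map_singleton, Multiset.prod_singleton]
        ring
      have h2 := congrArg Polynomial.roots h1
      rwa [Polynomial.roots_multiset_prod_X_sub_C, Polynomial.roots_multiset_prod_X_sub_C] at h2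
    have hsum3 : ∑ i, (μ i)^3 = l1^3 + l2^3 + l3^3 + l4^3 + l5^3 := by
      have h1 := congrArg (fun s : Multiset ℝ => (s.map (fun a => a^3)).sum) hms
      simp only [Multiset.map_map, Multiset.insert_eq_cons, Multiset.map_cons,
        Multiset.sum_cons, Multiset.map_singleton, Multiset.sum_singleton] at h1
      have hL : ((Finset.univ.val.map ((fun a => a^3) ∘ μ)).sum : ℝ)
          = ∑ i, (μ i)^3 := rfl
      rw [hL] at h1
      linarith [h1]
    -- trace of Q^3
    have cancel' : ∀ (M : Matrix (Fin 5) (Fin 5) ℝ), star U * (U * M) = M := by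
      intro M; rw [← Matrix.mul_assoc, hU2, Matrix.one_mul]
    have hQ3 : Q * Q * Q = U * Matrix.diagonal (fun i => (μ i)^3) * star U := by
      calc Q * Q * Q
          = U * (Matrix.diagonal μ * (Matrix.diagonal μ * (Matrix.diagonal μ * star U))) := by
            rw [hspec]; simp only [Matrix.mul_assoc, cancel']
        _ = U * (Matrix.diagonal μ * Matrix.diagonal μ * Matrix.diagonal μ * star U) := by
            simp only [Matrix.mul_assoc]
        _ = U * (Matrix.diagonal (fun i => (μ i)^3) * star U) := by
            rw [Matrix.diagonal_mul_diagonal, Matrix.diagonal_mul_diagonal]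
            refine congrArg (fun d => U * (Matrix.diagonal d * star U)) ?_
            funext i
            ring
        _ = U * Matrix.diagonal (fun i => (μ i)^3) * star U := by
            rw [Matrix.mul_assoc]
    have htr3 : (Q * Q * Q).trace = ∑ i, (μ i)^3 := by
      rw [hQ3, Matrix.trace_mul_cycle, hU2, Matrix.one_mul, Matrix.trace_diagonal]
    have htrnn : 0 ≤ (Q * Q * Q).trace := by
      rw [Matrix.trace]
      apply Finset.sum_nonneg
      intro i _
      rw [Matrix.diag_apply, Matrix.mul_apply]
      apply Finset.sum_nonneg
      intro j _
      rw [Matrix.mul_apply]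
      exact mul_nonneg (Finset.sum_nonneg fun k _ => mul_nonneg (hnn i k) (hnn k j)) (hnn j i)
    rw [htr3, hsum3] at htrnn
    linarith
  · -- sum of cubes nonneg → Q exists
    intro hs3
    obtain ⟨c, hcdef⟩ : ∃ x : ℝ, x = -(l2 + l5) := ⟨_, rfl⟩
    have hl14 : 0 ≤ l1 + l4 := by linarith
    have hc : 0 < c := by rw [hcdef]; linarith
    have hl2l5 : 0 < -(l2 * l5) := by nlinarith
    obtain ⟨r, hrdef⟩ : ∃ x : ℝ, x = Real.sqrt (-(l2 * l5)) := ⟨_, rfl⟩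
    have hr2 : r^2 = -(l2 * l5) := by rw [hrdef]; exact Real.sq_sqrt hl2l5.le
    have hrnn : 0 ≤ r := by rw [hrdef]; exact Real.sqrt_nonneg _
    obtain ⟨F, hFdef⟩ : ∃ x : ℝ, x = -(l1*l3 + l1*l4 + l3*l4) + l2*l5 := ⟨_, rfl⟩
    have hD : l1 * l3 * l4 < 0 := mul_neg_of_pos_of_neg (mul_pos hl1 h3) h4
    have hkey : c * F + l1*l3*l4 = (l1^3 + l2^3 + l3^3 + l4^3 + l5^3) / 3 := by
      rw [hcdef, hFdef]
      linear_combination (-1/3*l5^2 + 1/3*l4*l5 - 1/3*l4^2 + 1/3*l3*l5 + 1/3*l3*l4 - 1/3*l3^2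
        - 2/3*l2*l5 + 1/3*l2*l4 + 1/3*l2*l3 - 1/3*l2^2 + 1/3*l1*l5 + 1/3*l1*l4 + 1/3*l1*l3
        + 1/3*l1*l2 - 1/3*l1^2) * hsum
    have hcF : 0 < c * F := by linarith
    have hF : 0 < F := by
      by_contra h
      push_neg at h
      nlinarith [mul_nonneg hc.le (neg_nonneg.mpr h)]
    -- find v by the intermediate value theorem
    obtain ⟨ρ, hρdef⟩ : ∃ x : ℝ, x = Real.sqrt (F/2) := ⟨_, rfl⟩
    have hρnn : 0 ≤ ρ := by rw [hρdef]; exact Real.sqrt_nonneg _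
    have hρ2 : ρ^2 = F/2 := by rw [hρdef]; exact Real.sq_sqrt (by linarith)
    set g : ℝ → ℝ := fun t => 4*r*t*Real.sqrt (F/2 - t^2) - 2*c*t^2 with hgdef
    have hgcont : Continuous g := by
      apply Continuous.sub
      · exact ((continuous_const.mul continuous_id).mul
          ((continuous_const.sub (continuous_pow 2)).sqrt))
      · exact continuous_const.mul (continuous_pow 2)
    have hg0 : g 0 = 0 := by simp [hgdef]
    have hgρ : g ρ = -(c * F) := by
      rw [hgdef]
      simp only
      rw [show F/2 - ρ^2 = 0 by rw [hρ2]; ring, Real.sqrt_zero, hρ2]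
      ring
    have hmem : l1*l3*l4 ∈ Set.Icc (g ρ) (g 0) := by
      constructor
      · rw [hgρ]; linarith
      · rw [hg0]; linarith
    have hsub := intermediate_value_Icc' hρnn hgcont.continuousOn
    obtain ⟨v, hvmem, hgv⟩ := hsub hmem
    obtain ⟨hv0, hvρ⟩ := hvmem
    have hv2 : v^2 ≤ F/2 := by nlinarith
    obtain ⟨u, hudef⟩ : ∃ x : ℝ, x = Real.sqrt (F/2 - v^2) := ⟨_, rfl⟩
    have hu2 : u^2 = F/2 - v^2 := by rw [hudef]; exact Real.sq_sqrt (by linarith)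
    have hunn : 0 ≤ u := by rw [hudef]; exact Real.sqrt_nonneg _
    have hE4 : 4*r*u*v - 2*c*v^2 = l1*l3*l4 := by
      have h' := hgv
      rw [hgdef] at h'
      simp only at h'
      rw [← hudef] at h'
      linear_combination h'
    refine ⟨Matrix.of ![![0, r, u, 0, c], ![r, 0, v, 0, 0], ![u, v, 0, v, u],
        ![0, 0, v, 0, r], ![c, 0, u, r, 0]], ?_, ?_, ?_, ?_⟩
    · -- nonnegative entries
      intro i j
      fin_cases i <;> fin_cases j <;>
        simp [Matrix.vecHead, Matrix.vecTail] <;> linarith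
    · -- symmetric
      ext i j
      fin_cases i <;> fin_cases j <;> rfl
    · -- commutes with J5
      ext i j
      fin_cases i <;> fin_cases j <;>
        simp (config := { decide := true }) [Matrix.mul_apply, Fin.sum_univ_five, J5,
          Matrix.vecHead, Matrix.vecTail]
    · -- characteristic polynomial
      rw [aux_Q_charpoly]
      rw [aux_factor3 c (r^2 + 2*u^2 + 2*v^2) (4*r*u*v - 2*c*v^2) l1 l3 l4
          (by rw [hcdef]; linarith)
          (by rw [hr2, hu2, hFdef]; ring)
          (by rw [hE4]),
        aux_factor2 c (r^2) l2 l5 (by rw [hcdef]) (by rw [hr2])]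
      ring
end

section
/- Let 1 ≥ λ2 ≥ λ3 > 0 > λ4 ≥ λ5 ≥ −1 be real numbers such that 1 + λ2 + λ3 + λ4 + λ5 = 0 and 1 + λ2³ + λ3³ + λ4³ + λ5³ ≥ 0. If 1 + λ2 + λ4 + λ5 < 0, then λ2 + λ4 < 0 and λ2·λ4 − λ3·λ5 − λ3 − λ5 ≥ (λ3·λ5)/(λ2 + λ4). -/
theorem stmt_3 (l2 l3 l4 l5 : ℝ)
    (h12 : 1 ≥ l2) (h23 : l2 ≥ l3) (h3 : l3 > 0) (h4 : 0 > l4) (h45 : l4 ≥ l5)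
    (h5 : l5 ≥ -1)
    (hsum : 1 + l2 + l3 + l4 + l5 = 0)
    (hcube : 1 + l2 ^ 3 + l3 ^ 3 + l4 ^ 3 + l5 ^ 3 ≥ 0)
    (hneg : 1 + l2 + l4 + l5 < 0) :
    l2 + l4 < 0 ∧ l2 * l4 - l3 * l5 - l3 - l5 ≥ l3 * l5 / (l2 + l4) := by
  have hs : l2 + l4 < 0 := by nlinarith
  refine ⟨hs, ?_⟩
  rw [ge_iff_le, div_le_iff_of_neg hs]
  have h5e : l5 = -1 - l2 - l3 - l4 := by linarith
  subst h5e
  nlinarith [hcube]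
end

section
/- Let λ1 ≥ λ2 ≥ λ3 ≥ λ4 ≥ λ5 ≥ −λ1 be real numbers with λ1 + λ2 + λ3 + λ4 + λ5 ≥ 0. If at least one of the following conditions holds: (1) λ4 ≥ 0 or λ2 ≤ 0; (2) λ2 ≥ 0 > λ3 and λ1 + λ2 + λ3 + λ4 + λ5 ≥ λ2 + λ5; (3) λ3 ≥ 0 > λ4 and λ1 + λ2 + λ4 + λ5 ≥ 0; then there exists a 5×5 nonnegative bisymmetric real matrix whose spectrum is λ1, λ2, λ3, λ4, λ5. -/
open Matrix Polynomial

section Aux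

variable {R : Type*} [CommRing R]

private theorem det_fin_four' (A : Matrix (Fin 4) (Fin 4) R) :
    A.det =
      A 0 0 * (A 1 1 * (A 2 2 * A 3 3 - A 2 3 * A 3 2) - A 1 2 * (A 2 1 * A 3 3 - A 2 3 * A 3 1) + A 1 3 * (A 2 1 * A 3 2 - A 2 2 * A 3 1))
    - A 0 1 * (A 1 0 * (A 2 2 * A 3 3 - A 2 3 * A 3 2) - A 1 2 * (A 2 0 * A 3 3 - A 2 3 * A 3 0) + A 1 3 * (A 2 0 * A 3 2 - A 2 2 * A 3 0))
    + A 0 2 * (A 1 0 * (A 2 1 * A 3 3 - A 2 3 * A 3 1) - A 1 1 * (A 2 0 * A 3 3 - A 2 3 * A 3 0) + A 1 3 * (A 2 0 * A 3 1 - A 2 1 * A 3 0))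
    - A 0 3 * (A 1 0 * (A 2 1 * A 3 2 - A 2 2 * A 3 1) - A 1 1 * (A 2 0 * A 3 2 - A 2 2 * A 3 0) + A 1 2 * (A 2 0 * A 3 1 - A 2 1 * A 3 0)) := by
  rw [Matrix.det_succ_row_zero]
  simp only [Fin.sum_univ_succ, Fin.sum_univ_zero, det_fin_three, submatrix_apply,
    Fin.succ_zero_eq_one, Fin.succ_one_eq_two, Fin.succAbove_zero, Fin.succ_succAbove_zero,
    Fin.succ_succAbove_one, ← Nat.not_even_iff_odd, Fin.val_zero, Fin.val_succ, Even.add_self,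
    Fin.succ_succAbove_succ, Fin.val_one,
    show (Fin.succ 2 : Fin 4) = 3 from rfl,
    show Fin.succAbove (2 : Fin 4) (2 : Fin 3) = 3 from rfl,
    show Fin.succAbove (1 : Fin 4) (2 : Fin 3) = 3 from rfl,
    show Fin.castSucc (2 : Fin 3) = (2 : Fin 4) from rfl,
    show Fin.succAbove (3 : Fin 4) (2 : Fin 3) = 2 from rfl]
  norm_num
  ring

set_option maxHeartbeats 1000000 in
private theorem det_fin_five' (A : Matrix (Fin 5) (Fin 5) R) :
    A.det =
      A 0 0 * (A 1 1 * (A 2 2 * (A 3 3 * A 4 4 - A 3 4 * A 4 3) - A 2 3 * (A 3 2 * A 4 4 - A 3 4 * A 4 2) + A 2 4 * (A 3 2 * A 4 3 - A 3 3 * A 4 2)) - A 1 2 * (A 2 1 * (A 3 3 * A 4 4 - A 3 4 * A 4 3) - A 2 3 * (A 3 1 * A 4 4 - A 3 4 * A 4 1) + A 2 4 * (A 3 1 * A 4 3 - A 3 3 * A 4 1)) + A 1 3 * (A 2 1 * (A 3 2 * A 4 4 - A 3 4 * A 4 2) - A 2 2 * (A 3 1 * A 4 4 - A 3 4 * A 4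 1) + A 2 4 * (A 3 1 * A 4 2 - A 3 2 * A 4 1)) - A 1 4 * (A 2 1 * (A 3 2 * A 4 3 - A 3 3 * A 4 2) - A 2 2 * (A 3 1 * A 4 3 - A 3 3 * A 4 1) + A 2 3 * (A 3 1 * A 4 2 - A 3 2 * A 4 1)))
    - A 0 1 * (A 1 0 * (A 2 2 * (A 3 3 * A 4 4 - A 3 4 * A 4 3) - A 2 3 * (A 3 2 * A 4 4 - A 3 4 * A 4 2) + A 2 4 * (A 3 2 * A 4 3 - A 3 3 * A 4 2)) - A 1 2 * (A 2 0 * (A 3 3 * A 4 4 - A 3 4 * A 4 3) - A 2 3 * (A 3 0 * A 4 4 - A 3 4 * A 4 0) + A 2 4 * (A 3 0 * A 4 3 - A 3 3 * A 4 0)) + A 1 3 * (A 2 0 * (A 3 2 * A 4 4 - A 3 4 * A 4 2) - A 2 2 * (A 3 0 * A 4 4 - A 3 4 * A 4 0) + A 2 4 * (A 3 0 * A 4 2 - A 3 2 * A 4 0)) - A 1 4 * (A 2 0 * (A 3 2 * A 4 3 - A 3 3 * A 4 2) - A 2 2 * (A 3 0 * A 4 3 - A 3 3 * A 4 0) + A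 2 3 * (A 3 0 * A 4 2 - A 3 2 * A 4 0)))
    + A 0 2 * (A 1 0 * (A 2 1 * (A 3 3 * A 4 4 - A 3 4 * A 4 3) - A 2 3 * (A 3 1 * A 4 4 - A 3 4 * A 4 1) + A 2 4 * (A 3 1 * A 4 3 - A 3 3 * A 4 1)) - A 1 1 * (A 2 0 * (A 3 3 * A 4 4 - A 3 4 * A 4 3) - A 2 3 * (A 3 0 * A 4 4 - A 3 4 * A 4 0) + A 2 4 * (A 3 0 * A 4 3 - A 3 3 * A 4 0)) + A 1 3 * (A 2 0 * (A 3 1 * A 4 4 - A 3 4 * A 4 1) - A 2 1 * (A 3 0 * A 4 4 - A 3 4 * A 4 0) + A 2 4 * (A 3 0 * A 4 1 - A 3 1 * A 4 0)) - A 1 4 * (A 2 0 * (A 3 1 * A 4 3 - A 3 3 * A 4 1) - A 2 1 * (A 3 0 * A 4 3 - A 3 3 * A 4 0) + A 2 3 * (A 3 0 * A 4 1 - A 3 1 * A 4 0)))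
    - A 0 3 * (A 1 0 * (A 2 1 * (A 3 2 * A 4 4 - A 3 4 * A 4 2) - A 2 2 * (A 3 1 * A 4 4 - A 3 4 * A 4 1) + A 2 4 * (A 3 1 * A 4 2 - A 3 2 * A 4 1)) - A 1 1 * (A 2 0 * (A 3 2 * A 4 4 - A 3 4 * A 4 2) - A 2 2 * (A 3 0 * A 4 4 - A 3 4 * A 4 0) + A 2 4 * (A 3 0 * A 4 2 - A 3 2 * A 4 0)) + A 1 2 * (A 2 0 * (A 3 1 * A 4 4 - A 3 4 * A 4 1) - A 2 1 * (A 3 0 * A 4 4 - A 3 4 * A 4 0) + A 2 4 * (A 3 0 * A 4 1 - A 3 1 * A 4 0)) - A 1 4 * (A 2 0 * (A 3 1 * A 4 2 - A 3 2 * A 4 1) - A 2 1 * (A 3 0 * A 4 2 - A 3 2 * A 4 0) + A 2 2 * (A 3 0 * A 4 1 - A 3 1 * A 4 0)))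
    + A 0 4 * (A 1 0 * (A 2 1 * (A 3 2 * A 4 3 - A 3 3 * A 4 2) - A 2 2 * (A 3 1 * A 4 3 - A 3 3 * A 4 1) + A 2 3 * (A 3 1 * A 4 2 - A 3 2 * A 4 1)) - A 1 1 * (A 2 0 * (A 3 2 * A 4 3 - A 3 3 * A 4 2) - A 2 2 * (A 3 0 * A 4 3 - A 3 3 * A 4 0) + A 2 3 * (A 3 0 * A 4 2 - A 3 2 * A 4 0)) + A 1 2 * (A 2 0 * (A 3 1 * A 4 3 - A 3 3 * A 4 1) - A 2 1 * (A 3 0 * A 4 3 - A 3 3 * A 4 0) + A 2 3 * (A 3 0 * A 4 1 - A 3 1 * A 4 0)) - A 1 3 * (A 2 0 * (A 3 1 * A 4 2 - A 3 2 * A 4 1) - A 2 1 * (A 3 0 * A 4 2 - A 3 2 * A 4 0) + A 2 2 * (A 3 0 * A 4 1 - A 3 1 * A 4 0))) := by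
  rw [Matrix.det_succ_row_zero]
  simp only [Fin.sum_univ_succ, Fin.sum_univ_zero, det_fin_four', submatrix_apply,
    Fin.succ_zero_eq_one, Fin.succ_one_eq_two, Fin.succAbove_zero, Fin.succ_succAbove_zero,
    Fin.succ_succAbove_one, ← Nat.not_even_iff_odd, Fin.val_zero, Fin.val_succ, Even.add_self,
    Fin.succ_succAbove_succ, Fin.val_one,
    show (Fin.succ 2 : Fin 5) = 3 from rfl,
    show (Fin.succ 3 : Fin 5) = 4 from rfl,
    show ((2:Fin 4).succ : Fin 5) = 3 from rfl,
    show Fin.succAbove (2 : Fin 5) (2 : Fin 4) = 3 from rfl,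
    show Fin.succAbove (2 : Fin 5) (3 : Fin 4) = 4 from rfl,
    show Fin.succAbove (1 : Fin 5) (2 : Fin 4) = 3 from rfl,
    show Fin.succAbove (1 : Fin 5) (3 : Fin 4) = 4 from rfl,
    show Fin.succAbove (3 : Fin 5) (2 : Fin 4) = 2 from rfl,
    show Fin.succAbove (3 : Fin 5) (3 : Fin 4) = 4 from rfl,
    show Fin.succAbove (4 : Fin 5) (2 : Fin 4) = 2 from rfl,
    show Fin.succAbove (4 : Fin 5) (3 : Fin 4) = 3 from rfl,
    show Fin.castSucc (2 : Fin 4) = (2 : Fin 5) from rfl,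
    show Fin.castSucc (3 : Fin 4) = (3 : Fin 5) from rfl,
    show (Fin.succ (2:Fin 3) : Fin 4) = 3 from rfl,
    show (Fin.succ (1:Fin 2) : Fin 3) = 2 from rfl,
    show Fin.castSucc (2 : Fin 3) = (2 : Fin 4) from rfl,
    show Fin.succAbove (3 : Fin 4) (2 : Fin 3) = 2 from rfl,
    show Fin.succAbove (2 : Fin 4) (2 : Fin 3) = 3 from rfl,
    show Fin.succAbove (1 : Fin 4) (2 : Fin 3) = 3 from rfl]
  norm_num
  ring

end Aux

private lemma factor5 (t1 t2 t3 s1 s2 m1 m2 m3 n1 n2 : ℝ)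
    (h1 : t1 = m1 + m2 + m3) (h2 : t2 = m1*m2 + m1*m3 + m2*m3) (h3 : t3 = m1*m2*m3)
    (h4 : s1 = n1 + n2) (h5 : s2 = n1*n2) :
    (X^3 - C t1 * X^2 + C t2 * X - C t3) * (X^2 - C s1 * X + C s2)
      = ((X - C m1) * (X - C m2) * (X - C m3)) * ((X - C n1) * (X - C n2)) := by
  subst h1 h2 h3 h4 h5
  simp only [C_add, C_mul]
  ring

private def Qmat (a b c d e f g h k : ℝ) : Matrix (Fin 5) (Fin 5) ℝ :=
  !![a, b, c, d, e;
     b, f, g, h, d;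
     c, g, k, g, c;
     d, h, g, f, b;
     e, d, c, b, a]

private lemma charmQ (a b c d e f g h k : ℝ) :
    charmatrix (Qmat a b c d e f g h k) =
    !![X - C a, -C b, -C c, -C d, -C e;
       -C b, X - C f, -C g, -C h, -C d;
       -C c, -C g, X - C k, -C g, -C c;
       -C d, -C h, -C g, X - C f, -C b;
       -C e, -C d, -C c, -C b, X - C a] := by
  ext i j
  fin_cases i <;> fin_cases j <;>
    first
      | (rw [charmatrix_apply_eq]; simp [Qmat])
      | (rw [charmatrix_apply_ne _ _ _ (by decide)]; simp [Qmat])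

set_option maxHeartbeats 1000000 in
private lemma det5fact (a b c d e f g h k : ℝ) :
    (!![X - C a, -C b, -C c, -C d, -C e;
        -C b, X - C f, -C g, -C h, -C d;
        -C c, -C g, X - C k, -C g, -C c;
        -C d, -C h, -C g, X - C f, -C b;
        -C e, -C d, -C c, -C b, X - C a] : Matrix (Fin 5) (Fin 5) ℝ[X]).det =
    (X^3 - C (a+e+f+h+k) * X^2
       + C ((a+e)*(f+h) + (a+e)*k + (f+h)*k - (b+d)^2 - 2*c^2 - 2*g^2) * X
       - C ((a+e)*(f+h)*k + 4*c*g*(b+d) - 2*(a+e)*g^2 - 2*(f+h)*c^2 - k*(b+d)^2)) *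
    (X^2 - C ((a-e)+(f-h)) * X + C ((a-e)*(f-h) - (b-d)^2)) := by
  simp only [C_add, C_sub, C_mul, C_pow, map_ofNat]
  rw [det_fin_five']
  simp only [Matrix.cons_val', Matrix.cons_val_zero, Matrix.cons_val_one, Matrix.head_cons,
    Matrix.empty_val', Matrix.cons_val_fin_one, Matrix.head_fin_const, Matrix.cons_val_succ,
    Matrix.of_apply, Matrix.cons_val_two, Matrix.cons_val_three, Matrix.cons_val_four,
    Matrix.tail_cons]
  ring

set_option maxHeartbeats 1000000 in
private lemma buildMN (m1 m2 m3 n1 n2 M11 M12 M13 M22 M23 M33 N11 N12 N22 : ℝ)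
    (h1 : 0 ≤ M11 + N11) (h2 : 0 ≤ M11 - N11) (h3 : 0 ≤ M12 + N12) (h4 : 0 ≤ M12 - N12)
    (h5 : 0 ≤ M22 + N22) (h6 : 0 ≤ M22 - N22) (h7 : 0 ≤ M13) (h8 : 0 ≤ M23) (h9 : 0 ≤ M33)
    (E1 : M11 + M22 + M33 = m1 + m2 + m3)
    (E2 : M11*M22 + M11*M33 + M22*M33 - M12^2 - M13^2 - M23^2 = m1*m2 + m1*m3 + m2*m3)
    (E3 : M11*M22*M33 + 2*M12*M13*M23 - M11*M23^2 - M22*M13^2 - M33*M12^2 = m1*m2*m3)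
    (E4 : N11 + N22 = n1 + n2) (E5 : N11*N22 - N12^2 = n1*n2) :
    ∃ Q : Matrix (Fin 5) (Fin 5) ℝ,
      (∀ i j, 0 ≤ Q i j) ∧ Q = Qᵀ ∧ Q * J5 = J5 * Q ∧
      Q.charpoly = ((X - C m1) * (X - C m2) * (X - C m3)) * ((X - C n1) * (X - C n2)) := by
  have hs2 : Real.sqrt 2 ^ 2 = 2 := Real.sq_sqrt (by norm_num)
  have hc2 : (M13 / Real.sqrt 2)^2 = M13^2/2 := by rw [div_pow, hs2]
  have hg2 : (M23 / Real.sqrt 2)^2 = M23^2/2 := by rw [div_pow, hs2]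
  have hcg : (M13 / Real.sqrt 2) * (M23 / Real.sqrt 2) = M13*M23/2 := by
    rw [div_mul_div_comm, show Real.sqrt 2 * Real.sqrt 2 = 2 from Real.mul_self_sqrt (by norm_num)]
  refine ⟨Qmat ((M11+N11)/2) ((M12+N12)/2) (M13/Real.sqrt 2) ((M12-N12)/2) ((M11-N11)/2)
      ((M22+N22)/2) (M23/Real.sqrt 2) ((M22-N22)/2) M33, ?_, ?_, ?_, ?_⟩
  · intro i j
    fin_cases i <;> fin_cases j <;> simp [Qmat] <;>
      first
        | linarith
        | exact div_nonneg h7 (Real.sqrt_nonneg 2)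
        | exact div_nonneg h8 (Real.sqrt_nonneg 2)
  · ext i j
    fin_cases i <;> fin_cases j <;> rfl
  · ext i j
    fin_cases i <;> fin_cases j <;>
      norm_num [Qmat, J5, Matrix.mul_apply, Fin.sum_univ_five, Matrix.cons_val,
        show ((0:Fin 5):ℕ) = 0 from rfl, show ((1:Fin 5):ℕ) = 1 from rfl,
        show ((2:Fin 5):ℕ) = 2 from rfl, show ((3:Fin 5):ℕ) = 3 from rfl,
        show ((4:Fin 5):ℕ) = 4 from rfl] <;> rfl
  · rw [Matrix.charpoly, charmQ, det5fact]
    rw [factor5 _ _ _ _ _ m1 m2 m3 n1 n2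
      (by linear_combination E1)
      (by linear_combination E2 - 2*hc2 - 2*hg2)
      (by linear_combination E3 + 4*M12*hcg - 2*M11*hg2 - 2*M22*hc2)
      (by linear_combination E4)
      (by linear_combination E5)]

private lemma caseII (l1 l2 l3 l4 l5 w : ℝ)
    (h12 : l1 ≥ l2) (h23 : l2 ≥ l3) (h34 : l3 ≥ l4) (h45 : l4 ≥ l5)
    (h2 : l2 ≤ 0)
    (hw1 : -l2 - l4 - l5 ≤ w) (hw2 : l2 + l4 - l5 ≤ w) (hw3 : w ≤ l1 + l3) (hw4 : w ≤ l1) :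
    ∃ Q : Matrix (Fin 5) (Fin 5) ℝ,
      (∀ i j, 0 ≤ Q i j) ∧ Q = Qᵀ ∧ Q * J5 = J5 * Q ∧
      Q.charpoly = (X - C l1) * (X - C l2) * (X - C l3) * (X - C l4) * (X - C l5) := by
  have hw0 : 0 ≤ w := by linarith
  have hyarg : 0 ≤ (l1 - w) * (w - l3) / 2 := by
    apply div_nonneg _ (by norm_num)
    apply mul_nonneg <;> linarith
  set y := Real.sqrt ((l1 - w) * (w - l3) / 2) with hy
  have hy2 : y ^ 2 = (l1 - w) * (w - l3) / 2 := Real.sq_sqrt hyarg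
  have hy0 : 0 ≤ y := Real.sqrt_nonneg _
  obtain ⟨Q, hQ1, hQ2, hQ3, hQ4⟩ :=
    buildMN l1 l2 l3 l4 l5 ((w + l2) / 2) ((w - l2) / 2) y ((w + l2) / 2) y (l1 + l3 - w)
      ((l4 + l5) / 2) ((l4 - l5) / 2) ((l4 + l5) / 2)
      (by linarith) (by linarith) (by linarith) (by linarith) (by linarith) (by linarith)
      hy0 hy0 (by linarith)
      (by ring)
      (by linear_combination (-2 : ℝ) * hy2)
      (by linear_combination (2 * ((w - l2) / 2) - (w + l2) / 2 - (w + l2) / 2) * hy2)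
      (by ring) (by ring)
  exact ⟨Q, hQ1, hQ2, hQ3, by rw [hQ4]; ring⟩

private lemma caseIII (l1 l2 l3 l4 l5 p : ℝ)
    (h12 : l1 ≥ l2) (h45 : l4 ≥ l5) (h3 : 0 ≤ l3) (h4 : l4 ≤ 0) (h5 : l5 ≤ 0)
    (hp1 : l2 ≤ p) (hp2 : -l4 ≤ p) (hp3 : p ≤ l1) (hp4 : 0 ≤ l1 + l2 - p + l5) :
    ∃ Q : Matrix (Fin 5) (Fin 5) ℝ,
      (∀ i j, 0 ≤ Q i j) ∧ Q = Qᵀ ∧ Q * J5 = J5 * Q ∧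
      Q.charpoly = (X - C l1) * (X - C l2) * (X - C l3) * (X - C l4) * (X - C l5) := by
  have hrarg : 0 ≤ (l1 - p) * (p - l2) := by
    apply mul_nonneg <;> linarith
  set r := Real.sqrt ((l1 - p) * (p - l2)) with hr
  have hr2 : r ^ 2 = (l1 - p) * (p - l2) := Real.sq_sqrt hrarg
  have hr0 : 0 ≤ r := Real.sqrt_nonneg _
  obtain ⟨Q, hQ1, hQ2, hQ3, hQ4⟩ :=
    buildMN l1 l2 l3 l4 l5 p r 0 (l1 + l2 - p) 0 l3 l4 0 l5
      (by linarith) (by linarith) (by linarith) (by linarith) (by linarith) (by linarith)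
      le_rfl (by linarith) h3
      (by ring)
      (by linear_combination (-1 : ℝ) * hr2)
      (by linear_combination (-l3) * hr2)
      (by ring) (by ring)
  exact ⟨Q, hQ1, hQ2, hQ3, by rw [hQ4]; ring⟩

theorem stmt_4 (l1 l2 l3 l4 l5 : ℝ)
    (h12 : l1 ≥ l2) (h23 : l2 ≥ l3) (h34 : l3 ≥ l4) (h45 : l4 ≥ l5) (h5 : l5 ≥ -l1)
    (hsum : l1 + l2 + l3 + l4 + l5 ≥ 0)
    (hcond : (l4 ≥ 0 ∨ l2 ≤ 0) ∨
             (l2 ≥ 0 ∧ 0 > l3 ∧ l1 + l2 + l3 + l4 + l5 ≥ l2 + l5) ∨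
             (l3 ≥ 0 ∧ 0 > l4 ∧ l1 + l2 + l4 + l5 ≥ 0)) :
    ∃ Q : Matrix (Fin 5) (Fin 5) ℝ,
      (∀ i j, 0 ≤ Q i j) ∧ Q = Qᵀ ∧ Q * J5 = J5 * Q ∧
      Q.charpoly = (X - C l1) * (X - C l2) * (X - C l3) * (X - C l4) * (X - C l5) := by
  rcases hcond with (h4nn | h2np) | ⟨h2p, h3n, hs25⟩ | ⟨h3p, h4n, h1245⟩
  · -- Case I : l4 ≥ 0
    obtain ⟨Q, hQ1, hQ2, hQ3, hQ4⟩ :=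
      buildMN l1 l2 l3 l5 l4 l1 0 0 l2 0 l3 l5 0 l4
        (by linarith) (by linarith) (by norm_num) (by norm_num)
        (by linarith) (by linarith) le_rfl le_rfl (by linarith)
        (by ring) (by ring) (by ring) (by ring) (by ring)
    exact ⟨Q, hQ1, hQ2, hQ3, by rw [hQ4]; ring⟩
  · -- Case II : l2 ≤ 0
    rcases le_total (l2 + l4 - l5) (-l2 - l4 - l5) with hc | hc
    · exact caseII l1 l2 l3 l4 l5 (-l2 - l4 - l5) h12 h23 h34 h45 h2np le_rfl hc
        (by linarith) (by linarith)
    · exact caseII l1 l2 l3 l4 l5 (l2 + l4 - l5) h12 h23 h34 h45 h2np hc le_rfl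
        (by linarith) (by linarith)
  · -- Case 2 : l2 ≥ 0 > l3
    have hA : 0 ≤ l1 + l3 + l4 := by linarith
    have hl4 : l4 < 0 := by linarith
    have hl5 : l5 < 0 := by linarith
    rcases le_or_gt 0 (l2 + l5) with hC4 | hC4
    · -- construction IV
      have hrarg : 0 ≤ (l1 + l4) * (-l3 - l4) := by
        apply mul_nonneg <;> linarith
      set r := Real.sqrt ((l1 + l4) * (-l3 - l4)) with hr
      have hr2 : r ^ 2 = (l1 + l4) * (-l3 - l4) := Real.sq_sqrt hrarg
      have hr0 : 0 ≤ r := Real.sqrt_nonneg _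
      obtain ⟨Q, hQ1, hQ2, hQ3, hQ4⟩ :=
        buildMN l1 l2 l3 l4 l5 (-l4) 0 r l2 0 (l1 + l3 + l4) l4 0 l5
          (by linarith) (by linarith) (by norm_num) (by norm_num)
          (by linarith) (by linarith) hr0 le_rfl hA
          (by ring)
          (by linear_combination (-1 : ℝ) * hr2)
          (by linear_combination (-l2) * hr2)
          (by ring) (by ring)
      exact ⟨Q, hQ1, hQ2, hQ3, by rw [hQ4]; ring⟩
    · rcases le_or_gt 0 (l1 + l3 + l4 + l5) with hC6 | hC6
      · -- construction V
        have hrarg : 0 ≤ (l1 + l3) * (-l3 - l5) := by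
          apply mul_nonneg <;> linarith
        set r := Real.sqrt ((l1 + l3) * (-l3 - l5)) with hr
        have hr2 : r ^ 2 = (l1 + l3) * (-l3 - l5) := Real.sq_sqrt hrarg
        have hr0 : 0 ≤ r := Real.sqrt_nonneg _
        obtain ⟨Q, hQ1, hQ2, hQ3, hQ4⟩ :=
          buildMN l1 l5 l2 l3 l4 (-l3) r 0 (l1 + l3 + l5) 0 l2 l3 0 l4
            (by linarith) (by linarith) (by linarith) (by linarith)
            (by linarith) (by linarith) le_rfl le_rfl (by linarith)
            (by ring)
            (by linear_combination (-1 : ℝ) * hr2)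
            (by linear_combination (-l2) * hr2)
            (by ring) (by ring)
        exact ⟨Q, hQ1, hQ2, hQ3, by rw [hQ4]; ring⟩
      · -- construction VI
        have hD : (0:ℝ) < -l5 - (l1 + l2 + l3 + l4 + l5) := by linarith
        have hxarg : 0 ≤ ((-l5) * (l4*l5 - (l4+l5)*(l1+l2+l3+l4+l5) - (l1*l2+l1*l3+l2*l3))
            - (l4*l5*(l1+l2+l3+l4+l5) - l1*l2*l3)) := by
          have hfac : ((-l5) * (l4*l5 - (l4+l5)*(l1+l2+l3+l4+l5) - (l1*l2+l1*l3+l2*l3))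
              - (l4*l5*(l1+l2+l3+l4+l5) - l1*l2*l3)) = (l1 + l5) * ((l2 + l5) * (l3 + l5)) := by
            ring
          rw [hfac]
          exact mul_nonneg (by linarith) (by nlinarith)
        have hzarg : 0 ≤ ((l4*l5*(l1+l2+l3+l4+l5) - l1*l2*l3)
            - (l1+l2+l3+l4+l5) * (l4*l5 - (l4+l5)*(l1+l2+l3+l4+l5) - (l1*l2+l1*l3+l2*l3))) := by
          have hfac : ((l4*l5*(l1+l2+l3+l4+l5) - l1*l2*l3)
              - (l1+l2+l3+l4+l5) * (l4*l5 - (l4+l5)*(l1+l2+l3+l4+l5) - (l1*l2+l1*l3+l2*l3)))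
              = (((l1+l2+l3+l4+l5) - l1) * ((l1+l2+l3+l4+l5) - l2)) * ((l1+l2+l3+l4+l5) - l3) := by
            ring
          rw [hfac]
          exact mul_nonneg (by nlinarith) (by linarith)
        set x := Real.sqrt ((((-l5) * (l4*l5 - (l4+l5)*(l1+l2+l3+l4+l5) - (l1*l2+l1*l3+l2*l3))
            - (l4*l5*(l1+l2+l3+l4+l5) - l1*l2*l3))) / (-l5 - (l1+l2+l3+l4+l5))) with hx
        set z := Real.sqrt ((((l4*l5*(l1+l2+l3+l4+l5) - l1*l2*l3)
            - (l1+l2+l3+l4+l5) * (l4*l5 - (l4+l5)*(l1+l2+l3+l4+l5) - (l1*l2+l1*l3+l2*l3))))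
            / (-l5 - (l1+l2+l3+l4+l5))) with hz
        have hx2 : x ^ 2 = (((-l5) * (l4*l5 - (l4+l5)*(l1+l2+l3+l4+l5) - (l1*l2+l1*l3+l2*l3))
            - (l4*l5*(l1+l2+l3+l4+l5) - l1*l2*l3))) / (-l5 - (l1+l2+l3+l4+l5)) :=
          Real.sq_sqrt (div_nonneg hxarg hD.le)
        have hz2 : z ^ 2 = (((l4*l5*(l1+l2+l3+l4+l5) - l1*l2*l3)
            - (l1+l2+l3+l4+l5) * (l4*l5 - (l4+l5)*(l1+l2+l3+l4+l5) - (l1*l2+l1*l3+l2*l3))))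
            / (-l5 - (l1+l2+l3+l4+l5)) :=
          Real.sq_sqrt (div_nonneg hzarg hD.le)
        have hx0 : 0 ≤ x := Real.sqrt_nonneg _
        have hz0 : 0 ≤ z := Real.sqrt_nonneg _
        have hxz : x ^ 2 + z ^ 2
            = l4*l5 - (l4+l5)*(l1+l2+l3+l4+l5) - (l1*l2+l1*l3+l2*l3) := by
          rw [hx2, hz2, ← add_div, div_eq_iff hD.ne']
          ring
        have hRR : (-l5) * z ^ 2 + (l1+l2+l3+l4+l5) * x ^ 2
            = l4*l5*(l1+l2+l3+l4+l5) - l1*l2*l3 := by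
          rw [hx2, hz2, eq_comm, ← sub_eq_zero]
          field_simp
          ring
        obtain ⟨Q, hQ1, hQ2, hQ3, hQ4⟩ :=
          buildMN l1 l2 l3 l5 l4 (-l5) x 0 (-l4) z (l1+l2+l3+l4+l5) l5 0 l4
            (by linarith) (by linarith) (by linarith) (by linarith)
            (by linarith) (by linarith) le_rfl hz0 (by linarith)
            (by ring)
            (by linear_combination -hxz)
            (by linear_combination -hRR)
            (by ring) (by ring)
        exact ⟨Q, hQ1, hQ2, hQ3, by rw [hQ4]; ring⟩
  · -- Case 3 : l3 ≥ 0 > l4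
    have hl5 : l5 ≤ 0 := by linarith
    rcases le_total (-l4) l2 with hc | hc
    · exact caseIII l1 l2 l3 l4 l5 l2 h12 h45 h3p (by linarith) hl5 le_rfl hc h12
        (by linarith)
    · exact caseIII l1 l2 l3 l4 l5 (-l4) h12 h45 h3p (by linarith) hl5 hc le_rfl
        (by linarith) (by linarith)
end

section
/- Let λ1 ≥ λ2 ≥ λ3 ≥ λ4 ≥ λ5 be real numbers with λ4 ≥ 0 and λ1 + λ5 ≥ 0. Then the 5×5 matrix L1 with rows ((λ1+λ5)/2, 0, 0, 0, (λ1−λ5)/2), (0, (λ2+λ4)/2, 0, (λ2−λ4)/2, 0), (0, 0, λ3, 0, 0), (0, (λ2−λ4)/2, 0, (λ2+λ4)/2, 0), ((λ1−λ5)/2, 0, 0, 0, (λ1+λ5)/2) is nonnegative and bisymmetric, and its spectrum is λ1, λ2, λ3, λ4, λ5. -/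
open Matrix Polynomial

private lemma v5_3 {α} (a b c d e : α) (h : ((3:Fin 4):ℕ) < 5) :
    ![a,b,c,d,e] ⟨((3:Fin 4):ℕ), h⟩ = d := rfl

set_option maxHeartbeats 4000000 in
private lemma charpoly_aux (l1 l2 l3 l4 l5 : ℝ) :
    (!![(l1 + l5) / 2, 0, 0, 0, (l1 - l5) / 2;
         0, (l2 + l4) / 2, 0, (l2 - l4) / 2, 0;
         0, 0, l3, 0, 0;
         0, (l2 - l4) / 2, 0, (l2 + l4) / 2, 0;
         (l1 - l5) / 2, 0, 0, 0, (l1 + l5) / 2]).charpoly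
      = (X - C l1) * (X - C l2) * (X - C l3) * (X - C l4) * (X - C l5) := by
  rw [Matrix.charpoly]
  rw [show (!![(l1 + l5) / 2, 0, 0, 0, (l1 - l5) / 2;
         0, (l2 + l4) / 2, 0, (l2 - l4) / 2, 0;
         0, 0, l3, 0, 0;
         0, (l2 - l4) / 2, 0, (l2 + l4) / 2, 0;
         (l1 - l5) / 2, 0, 0, 0, (l1 + l5) / 2]).charmatrix =
    !![X - C ((l1 + l5) / 2), 0, 0, 0, - C ((l1 - l5) / 2);
         0, X - C ((l2 + l4) / 2), 0, - C ((l2 - l4) / 2), 0;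
         0, 0, X - C l3, 0, 0;
         0, - C ((l2 - l4) / 2), 0, X - C ((l2 + l4) / 2), 0;
         - C ((l1 - l5) / 2), 0, 0, 0, X - C ((l1 + l5) / 2)] from by
    ext i j
    fin_cases i <;> fin_cases j <;>
      simp (config := { decide := true }) [charmatrix_apply, Matrix.diagonal_apply,
        Matrix.vecHead, Matrix.vecTail]]
  simp [Matrix.det_succ_row_zero, Fin.sum_univ_succ, Fin.succAbove]
  apply Polynomial.funext; intro x; simp; ring

theorem stmt_5 (l1 l2 l3 l4 l5 : ℝ)
    (h12 : l1 ≥ l2) (h23 : l2 ≥ l3) (h34 : l3 ≥ l4) (h45 : l4 ≥ l5)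
    (h4 : l4 ≥ 0) (h15 : l1 + l5 ≥ 0) :
    let L1 : Matrix (Fin 5) (Fin 5) ℝ :=
      !![(l1 + l5) / 2, 0, 0, 0, (l1 - l5) / 2;
         0, (l2 + l4) / 2, 0, (l2 - l4) / 2, 0;
         0, 0, l3, 0, 0;
         0, (l2 - l4) / 2, 0, (l2 + l4) / 2, 0;
         (l1 - l5) / 2, 0, 0, 0, (l1 + l5) / 2]
    (∀ i j, 0 ≤ L1 i j) ∧ L1 = L1ᵀ ∧ L1 * J5 = J5 * L1 ∧
      L1.charpoly = (X - C l1) * (X - C l2) * (X - C l3) * (X - C l4) * (X - C l5) := by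
  intro L1
  have h14 : l1 ≥ l4 := le_trans h34 (le_trans h23 h12)
  have h24 : l2 ≥ l4 := le_trans h34 h23
  have h15' : l1 ≥ l5 := le_trans h45 h14
  have h3 : (0:ℝ) ≤ l3 := le_trans h4 h34
  refine ⟨?_, ?_, ?_, charpoly_aux l1 l2 l3 l4 l5⟩
  · intro i j
    fin_cases i <;> fin_cases j <;>
      simp (config := { decide := true }) [L1, Matrix.vecHead, Matrix.vecTail] <;> linarith
  · ext i j
    fin_cases i <;> fin_cases j <;>
      simp (config := { decide := true }) [L1, Matrix.vecHead, Matrix.vecTail]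
  · ext i j
    fin_cases i <;> fin_cases j <;>
      simp (config := { decide := true }) [L1, J5, Matrix.mul_apply, Fin.sum_univ_succ,
        Matrix.vecHead, Matrix.vecTail]
end

section
/- Let λ1 ≥ 0 > λ2 ≥ λ3 ≥ λ4 ≥ λ5 ≥ −λ1 be real numbers with s := λ1 + λ2 + λ3 + λ4 + λ5 ≥ 0. Set a = (1/2)·√((λ1+λ5)(λ2+λ5)(λ3+λ4)/(λ1+λ2−λ3+λ5)), b = √(−(λ1+λ5)(λ2+λ5)(λ1+λ2+λ4+λ5)/(2(λ1+λ2−λ3+λ5))), and c = √(−(λ3+λ4)(λ1+λ2+λ4+λ5)/2). Then λ1+λ2−λ3+λ5 > 0, each quantity under a square root is nonnegative, and the 5×5 matrix L2 with rows (0, a, b, a, −λ5), (a, 0, c, −λ4, a), (b, c, s, c, b), (a, −λ4, c, 0, a), (−λ5, a, b, a, 0) is nonnegative and bisymmetric, and its spectrum is λ1, λ2, λ3, λ4, λ5. -/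
open Matrix Polynomial
set_option maxRecDepth 100000

lemma csfin2_0 : (Fin.castSucc 0 : Fin 3) = 0 := rfl
lemma sfin2_0 : (Fin.succ 0 : Fin 3) = 1 := rfl
lemma csfin2_1 : (Fin.castSucc 1 : Fin 3) = 1 := rfl
lemma sfin2_1 : (Fin.succ 1 : Fin 3) = 2 := rfl
lemma vfin2_0 : ((0 : Fin 3) : ℕ) = 0 := rfl
lemma vfin2_1 : ((1 : Fin 3) : ℕ) = 1 := rfl
lemma vfin2_2 : ((2 : Fin 3) : ℕ) = 2 := rfl
lemma csfin3_0 : (Fin.castSucc 0 : Fin 4) = 0 := rfl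
lemma sfin3_0 : (Fin.succ 0 : Fin 4) = 1 := rfl
lemma csfin3_1 : (Fin.castSucc 1 : Fin 4) = 1 := rfl
lemma sfin3_1 : (Fin.succ 1 : Fin 4) = 2 := rfl
lemma csfin3_2 : (Fin.castSucc 2 : Fin 4) = 2 := rfl
lemma sfin3_2 : (Fin.succ 2 : Fin 4) = 3 := rfl
lemma vfin3_0 : ((0 : Fin 4) : ℕ) = 0 := rfl
lemma vfin3_1 : ((1 : Fin 4) : ℕ) = 1 := rfl
lemma vfin3_2 : ((2 : Fin 4) : ℕ) = 2 := rfl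
lemma vfin3_3 : ((3 : Fin 4) : ℕ) = 3 := rfl
lemma csfin4_0 : (Fin.castSucc 0 : Fin 5) = 0 := rfl
lemma sfin4_0 : (Fin.succ 0 : Fin 5) = 1 := rfl
lemma csfin4_1 : (Fin.castSucc 1 : Fin 5) = 1 := rfl
lemma sfin4_1 : (Fin.succ 1 : Fin 5) = 2 := rfl
lemma csfin4_2 : (Fin.castSucc 2 : Fin 5) = 2 := rfl
lemma sfin4_2 : (Fin.succ 2 : Fin 5) = 3 := rfl
lemma csfin4_3 : (Fin.castSucc 3 : Fin 5) = 3 := rfl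
lemma sfin4_3 : (Fin.succ 3 : Fin 5) = 4 := rfl
lemma vfin4_0 : ((0 : Fin 5) : ℕ) = 0 := rfl
lemma vfin4_1 : ((1 : Fin 5) : ℕ) = 1 := rfl
lemma vfin4_2 : ((2 : Fin 5) : ℕ) = 2 := rfl
lemma vfin4_3 : ((3 : Fin 5) : ℕ) = 3 := rfl
lemma vfin4_4 : ((4 : Fin 5) : ℕ) = 4 := rfl

set_option maxHeartbeats 4000000 in
lemma det5 (m00 m01 m02 m03 m04 m10 m11 m12 m13 m14 m20 m21 m22 m23 m24 m30 m31 m32 m33 m34 m40 m41 m42 m43 m44 : ℝ) :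
    Matrix.det !![m00, m01, m02, m03, m04;
       m10, m11, m12, m13, m14;
       m20, m21, m22, m23, m24;
       m30, m31, m32, m33, m34;
       m40, m41, m42, m43, m44] = m00 * m11 * m22 * m33 * m44 - m00 * m11 * m22 * m34 * m43 - m00 * m11 * m23 * m32 * m44 + m00 * m11 * m23 * m34 * m42 + m00 * m11 * m24 * m32 * m43 - m00 * m11 * m24 * m33 * m42 - m00 * m12 * m21 * m33 * m44 + m00 * m12 * m21 * m34 * m43 + m00 * m12 * m23 * m31 * m44 - m00 * m12 * m23 * m34 * m41 - m00 * m12 * m24 * m31 * m43 + m00 * m12 * m24 * m33 * m41 + m00 * m13 * m21 * m32 * m44 - m00 * m13 * m21 * m34 * m42 - m00 * m13 * m22 * m31 * m44 + m00 * m13 * m22 * m34 * m41 + m00 * m13 * m24 * m31 * m42 - m00 * m13 * m24 * m32 * m41 - m00 * m14 * m21 * m32 * m43 + m00 * m14 * m21 * m33 * m42 + m00 * m14 * m22 * m31 * m43 - m00 * m14 * m22 * m33 * m41 - m00 * m14 * m23 * m31 * m42 + m00 * m14 * m23 * m32 * m41 - m01 * m10 * m22 * m33 * m44 + m01 * m10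 * m22 * m34 * m43 + m01 * m10 * m23 * m32 * m44 - m01 * m10 * m23 * m34 * m42 - m01 * m10 * m24 * m32 * m43 + m01 * m10 * m24 * m33 * m42 + m01 * m12 * m20 * m33 * m44 - m01 * m12 * m20 * m34 * m43 - m01 * m12 * m23 * m30 * m44 + m01 * m12 * m23 * m34 * m40 + m01 * m12 * m24 * m30 * m43 - m01 * m12 * m24 * m33 * m40 - m01 * m13 * m20 * m32 * m44 + m01 * m13 * m20 * m34 * m42 + m01 * m13 * m22 * m30 * m44 - m01 * m13 * m22 * m34 * m40 - m01 * m13 * m24 * m30 * m42 + m01 * m13 * m24 * m32 * m40 + m01 * m14 * m20 * m32 * m43 - m01 * m14 * m20 * m33 * m42 - m01 * m14 * m22 * m30 * m43 + m01 * m14 * m22 * m33 * m40 + m01 * m14 * m23 * m30 * m42 - m01 * m14 * m23 * m32 * m40 + m02 * m10 * m21 * m33 * m44 - m02 * m10 * m21 * m34 * m43 - m02 * m10 * m23 * m31 * m44 + m02 * m10 * m23 * m34 * m41 + m02 * m10 * m24 * m31 * m43 - m02 * m10 * m24 * m33 * m41 - m02 * m11 * m20 * m33 * m44 + m02 * m11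 * m20 * m34 * m43 + m02 * m11 * m23 * m30 * m44 - m02 * m11 * m23 * m34 * m40 - m02 * m11 * m24 * m30 * m43 + m02 * m11 * m24 * m33 * m40 + m02 * m13 * m20 * m31 * m44 - m02 * m13 * m20 * m34 * m41 - m02 * m13 * m21 * m30 * m44 + m02 * m13 * m21 * m34 * m40 + m02 * m13 * m24 * m30 * m41 - m02 * m13 * m24 * m31 * m40 - m02 * m14 * m20 * m31 * m43 + m02 * m14 * m20 * m33 * m41 + m02 * m14 * m21 * m30 * m43 - m02 * m14 * m21 * m33 * m40 - m02 * m14 * m23 * m30 * m41 + m02 * m14 * m23 * m31 * m40 - m03 * m10 * m21 * m32 * m44 + m03 * m10 * m21 * m34 * m42 + m03 * m10 * m22 * m31 * m44 - m03 * m10 * m22 * m34 * m41 - m03 * m10 * m24 * m31 * m42 + m03 * m10 * m24 * m32 * m41 + m03 * m11 * m20 * m32 * m44 - m03 * m11 * m20 * m34 * m42 - m03 * m11 * m22 * m30 * m44 + m03 * m11 * m22 * m34 * m40 + m03 * m11 * m24 * m30 * m42 - m03 * m11 * m24 * m32 * m40 - m03 * m12 * m20 * m31 * m44 + m03 * m12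 * m20 * m34 * m41 + m03 * m12 * m21 * m30 * m44 - m03 * m12 * m21 * m34 * m40 - m03 * m12 * m24 * m30 * m41 + m03 * m12 * m24 * m31 * m40 + m03 * m14 * m20 * m31 * m42 - m03 * m14 * m20 * m32 * m41 - m03 * m14 * m21 * m30 * m42 + m03 * m14 * m21 * m32 * m40 + m03 * m14 * m22 * m30 * m41 - m03 * m14 * m22 * m31 * m40 + m04 * m10 * m21 * m32 * m43 - m04 * m10 * m21 * m33 * m42 - m04 * m10 * m22 * m31 * m43 + m04 * m10 * m22 * m33 * m41 + m04 * m10 * m23 * m31 * m42 - m04 * m10 * m23 * m32 * m41 - m04 * m11 * m20 * m32 * m43 + m04 * m11 * m20 * m33 * m42 + m04 * m11 * m22 * m30 * m43 - m04 * m11 * m22 * m33 * m40 - m04 * m11 * m23 * m30 * m42 + m04 * m11 * m23 * m32 * m40 + m04 * m12 * m20 * m31 * m43 - m04 * m12 * m20 * m33 * m41 - m04 * m12 * m21 * m30 * m43 + m04 * m12 * m21 * m33 * m40 + m04 * m12 * m23 * m30 * m41 - m04 * m12 * m23 * m31 * m40 - m04 * m13 * m20 * m31 * m42 + m04 * m13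 * m20 * m32 * m41 + m04 * m13 * m21 * m30 * m42 - m04 * m13 * m21 * m32 * m40 - m04 * m13 * m22 * m30 * m41 + m04 * m13 * m22 * m31 * m40 := by
  rw [Matrix.det_succ_row_zero, Fin.sum_univ_five]
  simp [Matrix.det_succ_row_zero, Fin.sum_univ_succ, Matrix.det_fin_three,
    Matrix.submatrix_apply, Fin.succAbove]
  ring

set_option maxHeartbeats 4000000 in
theorem stmt_6 (l1 l2 l3 l4 l5 : ℝ)
    (h1 : l1 ≥ 0) (h2 : 0 > l2) (h23 : l2 ≥ l3) (h34 : l3 ≥ l4) (h45 : l4 ≥ l5)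
    (h5 : l5 ≥ -l1)
    (hsum : l1 + l2 + l3 + l4 + l5 ≥ 0) :
    0 < l1 + l2 - l3 + l5 ∧
    0 ≤ (l1 + l5) * (l2 + l5) * (l3 + l4) / (l1 + l2 - l3 + l5) ∧
    0 ≤ -((l1 + l5) * (l2 + l5) * (l1 + l2 + l4 + l5)) / (2 * (l1 + l2 - l3 + l5)) ∧
    0 ≤ -((l3 + l4) * (l1 + l2 + l4 + l5)) / 2 ∧
    let a : ℝ := (1 / 2) * Real.sqrt ((l1 + l5) * (l2 + l5) * (l3 + l4) / (l1 + l2 - l3 + l5))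
    let b : ℝ := Real.sqrt (-((l1 + l5) * (l2 + l5) * (l1 + l2 + l4 + l5)) / (2 * (l1 + l2 - l3 + l5)))
    let c : ℝ := Real.sqrt (-((l3 + l4) * (l1 + l2 + l4 + l5)) / 2)
    let L2 : Matrix (Fin 5) (Fin 5) ℝ :=
      !![0, a, b, a, -l5;
         a, 0, c, -l4, a;
         b, c, l1 + l2 + l3 + l4 + l5, c, b;
         a, -l4, c, 0, a;
         -l5, a, b, a, 0]
    (∀ i j, 0 ≤ L2 i j) ∧ L2 = L2ᵀ ∧ L2 * J5 = J5 * L2 ∧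
      L2.charpoly = (X - C l1) * (X - C l2) * (X - C l3) * (X - C l4) * (X - C l5) := by
  have hl3 : l3 < 0 := lt_of_le_of_lt h23 h2
  have hl4 : l4 < 0 := lt_of_le_of_lt h34 hl3
  have hl5 : l5 < 0 := lt_of_le_of_lt h45 hl4
  have hD : 0 < l1 + l2 - l3 + l5 := by linarith
  have hE : 0 < l1 + l2 + l4 + l5 := by linarith
  have hF : (l1 + l5) * (l2 + l5) ≤ 0 :=
    mul_nonpos_of_nonneg_of_nonpos (by linarith) (by linarith)
  have hG : l3 + l4 < 0 := by linarith
  have hFG : 0 ≤ (l1 + l5) * (l2 + l5) * (l3 + l4) := by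
    nlinarith [mul_nonneg (neg_nonneg.mpr hF) (neg_nonneg.mpr hG.le)]
  have hra : 0 ≤ (l1 + l5) * (l2 + l5) * (l3 + l4) / (l1 + l2 - l3 + l5) :=
    div_nonneg hFG hD.le
  have hrb : 0 ≤ -((l1 + l5) * (l2 + l5) * (l1 + l2 + l4 + l5)) / (2 * (l1 + l2 - l3 + l5)) := by
    apply div_nonneg _ (by linarith)
    nlinarith [mul_nonpos_of_nonpos_of_nonneg hF hE.le]
  have hrc : 0 ≤ -((l3 + l4) * (l1 + l2 + l4 + l5)) / 2 := by
    nlinarith [mul_nonpos_of_nonpos_of_nonneg hG.le hE.le]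
  refine ⟨hD, hra, hrb, hrc, ?_⟩
  intro a b c L2
  have ha : a = (1 / 2) * Real.sqrt ((l1 + l5) * (l2 + l5) * (l3 + l4) / (l1 + l2 - l3 + l5)) := rfl
  have hb : b = Real.sqrt (-((l1 + l5) * (l2 + l5) * (l1 + l2 + l4 + l5)) / (2 * (l1 + l2 - l3 + l5))) := rfl
  have hc : c = Real.sqrt (-((l3 + l4) * (l1 + l2 + l4 + l5)) / 2) := rfl
  have hL2 : L2 = !![0, a, b, a, -l5;
         a, 0, c, -l4, a;
         b, c, l1 + l2 + l3 + l4 + l5, c, b;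
         a, -l4, c, 0, a;
         -l5, a, b, a, 0] := rfl
  have ha0 : 0 ≤ a := by rw [ha]; positivity
  have hb0 : 0 ≤ b := Real.sqrt_nonneg _
  have hc0 : 0 ≤ c := Real.sqrt_nonneg _
  have ha2 : 4 * (l1 + l2 - l3 + l5) * a ^ 2 = (l1 + l5) * (l2 + l5) * (l3 + l4) := by
    rw [ha, mul_pow, Real.sq_sqrt hra]
    field_simp
    ring
  have hb2 : 2 * (l1 + l2 - l3 + l5) * b ^ 2 = -((l1 + l5) * (l2 + l5) * (l1 + l2 + l4 + l5)) := by
    rw [hb, Real.sq_sqrt hrb]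
    field_simp
  have hc2 : 2 * c ^ 2 = -((l3 + l4) * (l1 + l2 + l4 + l5)) := by
    rw [hc, Real.sq_sqrt hrc]; ring
  have habc : 4 * (l1 + l2 - l3 + l5) * (a * b * c) =
      (l1 + l5) * (l2 + l5) * (l3 + l4) * (l1 + l2 + l4 + l5) := by
    have hprod : a * b * c = (1 / 2) *
        Real.sqrt (((l1 + l5) * (l2 + l5) * (l3 + l4) / (l1 + l2 - l3 + l5)) *
          (-((l1 + l5) * (l2 + l5) * (l1 + l2 + l4 + l5)) / (2 * (l1 + l2 - l3 + l5))) *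
          (-((l3 + l4) * (l1 + l2 + l4 + l5)) / 2)) := by
      rw [ha, hb, hc, Real.sqrt_mul (mul_nonneg hra hrb), Real.sqrt_mul hra]
      ring
    have hsq : ((l1 + l5) * (l2 + l5) * (l3 + l4) / (l1 + l2 - l3 + l5)) *
          (-((l1 + l5) * (l2 + l5) * (l1 + l2 + l4 + l5)) / (2 * (l1 + l2 - l3 + l5))) *
          (-((l3 + l4) * (l1 + l2 + l4 + l5)) / 2) =
        ((l1 + l5) * (l2 + l5) * (l3 + l4) * (l1 + l2 + l4 + l5) / (2 * (l1 + l2 - l3 + l5))) ^ 2 := by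
      field_simp
    have hnn : 0 ≤ (l1 + l5) * (l2 + l5) * (l3 + l4) * (l1 + l2 + l4 + l5) / (2 * (l1 + l2 - l3 + l5)) :=
      div_nonneg (mul_nonneg hFG hE.le) (by linarith)
    rw [hprod, hsq, Real.sqrt_sq hnn]
    field_simp
    ring
  refine ⟨?_, ?_, ?_, ?_⟩
  · intro i j
    fin_cases i <;> fin_cases j <;>
      simp [hL2] <;> linarith
  · rw [hL2]
    ext i j
    fin_cases i <;> fin_cases j <;> simp
  · ext i j
    fin_cases i <;> fin_cases j <;>
      simp [hL2, J5, Matrix.mul_apply, Fin.sum_univ_five, vfin4_0, vfin4_1, vfin4_2, vfin4_3, vfin4_4]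
  · have hcp : L2.charpoly = (Matrix.charmatrix L2).det := rfl
    apply Polynomial.funext
    intro x
    have h1 : eval x L2.charpoly = ((Matrix.charmatrix L2).map (evalRingHom x)).det := by
      rw [hcp]
      exact RingHom.map_det (evalRingHom x) _
    have h2m : (Matrix.charmatrix L2).map (evalRingHom x) =
        !![x, -a, -b, -a, l5;
           -a, x, -c, l4, -a;
           -b, -c, x - (l1 + l2 + l3 + l4 + l5), -c, -b;
           -a, l4, -c, x, -a;
           l5, -a, -b, -a, x] := by
      ext i j
      fin_cases i <;> fin_cases j <;>
        simp [hL2, Matrix.charmatrix_apply_eq, Matrix.charmatrix_apply_ne, Matrix.map_apply]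
    rw [h1, h2m, det5]
    simp only [eval_mul, eval_sub, eval_X, eval_C]
    apply mul_left_cancel₀ (ne_of_gt hD)
    linear_combination (-(x - (l1 + l2 + l3 + l4 + l5)) * (x - l4) * (x - l5)) * ha2 +
      (-(x - l4) * (x + l4) * (x - l5)) * hb2 +
      (-(l1 + l2 - l3 + l5) * (x - l4) * (x - l5) * (x + l5)) * hc2 +
      (-2 * (x - l4) * (x - l5)) * habc
end

section
/- Let λ1 ≥ λ2 ≥ 0 > λ3 ≥ λ4 ≥ λ5 ≥ −λ1 be real numbers with λ2 + λ5 ≥ 0 and λ1 + λ3 + λ4 ≥ 0. Set d = √(−(λ3+λ4)(λ1+λ4)/2). Then the quantity under the square root is nonnegative, and the 5×5 matrix L3 with rows ((λ2+λ5)/2, 0, 0, 0, (λ2−λ5)/2), (0, 0, d, −λ4, 0), (0, d, λ1+λ3+λ4, d, 0), (0, −λ4, d, 0, 0), ((λ2−λ5)/2, 0, 0, 0, (λ2+λ5)/2) is nonnegative and bisymmetric, and its spectrum is λ1, λ2, λ3, λ4, λ5. -/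
open Matrix Polynomial

set_option maxHeartbeats 3200000 in
private lemma fin_mk3' {α} (u : Fin 5 → α) (h : ((3:Fin 4):ℕ) < 5) : u ⟨((3:Fin 4):ℕ), h⟩ = u 3 := rfl

set_option maxHeartbeats 3200000 in
private lemma aux_charpoly (l1 l2 l3 l4 l5 d : ℝ)
    (hd2 : d * d = -((l3 + l4) * (l1 + l4)) / 2) :
    (Matrix.charpoly !![(l2 + l5) / 2, 0, 0, 0, (l2 - l5) / 2;
         0, 0, d, -l4, 0;
         0, d, l1 + l3 + l4, d, 0;
         0, -l4, d, 0, 0;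
         (l2 - l5) / 2, 0, 0, 0, (l2 + l5) / 2] : ℝ[X]) =
      (X - C l1) * (X - C l2) * (X - C l3) * (X - C l4) * (X - C l5) := by
  have h : charmatrix !![(l2 + l5) / 2, 0, 0, 0, (l2 - l5) / 2;
         0, 0, d, -l4, 0;
         0, d, l1 + l3 + l4, d, 0;
         0, -l4, d, 0, 0;
         (l2 - l5) / 2, 0, 0, 0, (l2 + l5) / 2] =
    !![X - C ((l2 + l5)/2), 0, 0, 0, - C ((l2 - l5)/2);
       0, X, - C d, C l4, 0;
       0, - C d, X - (C l1 + C l3 + C l4), - C d, 0;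
       0, C l4, - C d, X, 0;
       - C ((l2 - l5)/2), 0, 0, 0, X - C ((l2 + l5)/2)] := by
    ext i j
    fin_cases i <;> fin_cases j <;>
      simp [charmatrix_apply, Matrix.one_apply, Matrix.vecHead, Matrix.vecTail]
  have hl2 : (C l2 : ℝ[X]) = C ((l2 + l5)/2) + C ((l2 - l5)/2) := by
    rw [← C_add]; congr 1; ring
  have hl5 : (C l5 : ℝ[X]) = C ((l2 + l5)/2) - C ((l2 - l5)/2) := by
    rw [← C_sub]; congr 1; ring
  have hdC : (C d : ℝ[X]) * C d * 2 = -((C l3 + C l4) * (C l1 + C l4)) := by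
    rw [← C_mul, hd2, show ((2:ℝ[X])) = C 2 from (map_ofNat C 2).symm, ← C_mul,
      ← C_add, ← C_add, ← C_mul, ← C_neg]
    congr 1; ring
  rw [Matrix.charpoly, h, hl2, hl5]
  simp [Matrix.det_succ_row_zero, Fin.sum_univ_succ, Fin.succAbove, Matrix.submatrix]
  linear_combination (C l4 - X) * ((X - C ((l2+l5)/2))^2 - C ((l2-l5)/2)^2) * hdC

theorem stmt_8 (l1 l2 l3 l4 l5 : ℝ)
    (h12 : l1 ≥ l2) (h2 : l2 ≥ 0) (h3 : 0 > l3) (h34 : l3 ≥ l4) (h45 : l4 ≥ l5)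
    (h5 : l5 ≥ -l1)
    (h25 : l2 + l5 ≥ 0) (h134 : l1 + l3 + l4 ≥ 0) :
    0 ≤ -((l3 + l4) * (l1 + l4)) / 2 ∧
    let d : ℝ := Real.sqrt (-((l3 + l4) * (l1 + l4)) / 2)
    let L3 : Matrix (Fin 5) (Fin 5) ℝ :=
      !![(l2 + l5) / 2, 0, 0, 0, (l2 - l5) / 2;
         0, 0, d, -l4, 0;
         0, d, l1 + l3 + l4, d, 0;
         0, -l4, d, 0, 0;
         (l2 - l5) / 2, 0, 0, 0, (l2 + l5) / 2]
    (∀ i j, 0 ≤ L3 i j) ∧ L3 = L3ᵀ ∧ L3 * J5 = J5 * L3 ∧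
      L3.charpoly = (X - C l1) * (X - C l2) * (X - C l3) * (X - C l4) * (X - C l5) := by
  have h0 : 0 ≤ -((l3 + l4) * (l1 + l4)) / 2 := by nlinarith
  refine ⟨h0, ?_⟩
  intro d L3
  have hd : 0 ≤ d := Real.sqrt_nonneg _
  have hd2 : d * d = -((l3 + l4) * (l1 + l4)) / 2 := Real.mul_self_sqrt h0
  refine ⟨?_, ?_, ?_, ?_⟩
  · intro i j
    fin_cases i <;> fin_cases j <;> simp [L3, Matrix.vecHead, Matrix.vecTail] <;> linarith
  · ext i j
    fin_cases i <;> fin_cases j <;> simp [L3, Matrix.vecHead, Matrix.vecTail]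
  · ext i j
    fin_cases i <;> fin_cases j <;>
      simp [L3, J5, Matrix.mul_apply, Fin.sum_univ_succ, Matrix.vecHead, Matrix.vecTail,
        show ((1:Fin 5):ℕ)=1 from rfl, show ((2:Fin 5):ℕ)=2 from rfl,
        show ((3:Fin 5):ℕ)=3 from rfl, show ((4:Fin 5):ℕ)=4 from rfl]
  · exact aux_charpoly l1 l2 l3 l4 l5 d hd2
end

section
/- Let λ1 ≥ λ2 ≥ λ3 ≥ 0 > λ4 ≥ λ5 ≥ −λ1 be real numbers with s := λ1 + λ2 + λ3 + λ4 + λ5 ≥ 0, λ1 + λ2 + λ4 + λ5 ≥ 0, λ2 + λ5 < 0 and λ3 + λ4 < 0. Set a = (1/2)·√((λ1+λ5)(λ2+λ5)(λ3+λ4)/(λ1+λ2−λ3+λ5)), b = √(−(λ1+λ5)(λ2+λ5)(λ1+λ2+λ4+λ5)/(2(λ1+λ2−λ3+λ5))), and c = √(−(λ3+λ4)(λ1+λ2+λ4+λ5)/2). Then λ1+λ2−λ3+λ5 > 0, each quantity under a square root is nonnegative, and the 5×5 matrix L2 with rows (0, a, b, a, −λ5), (a, 0, c, −λ4, a), (b,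 c, s, c, b), (a, −λ4, c, 0, a), (−λ5, a, b, a, 0) is nonnegative and bisymmetric, and its spectrum is λ1, λ2, λ3, λ4, λ5. -/
open Matrix Polynomial

set_option maxHeartbeats 2000000 in
theorem stmt_11 (l1 l2 l3 l4 l5 : ℝ)
    (h12 : l1 ≥ l2) (h23 : l2 ≥ l3) (h3 : l3 ≥ 0) (h4 : 0 > l4) (h45 : l4 ≥ l5)
    (h5 : l5 ≥ -l1)
    (hsum : l1 + l2 + l3 + l4 + l5 ≥ 0)
    (h1245 : l1 + l2 + l4 + l5 ≥ 0) (h25 : l2 + l5 < 0) (h34 : l3 + l4 < 0) :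
    0 < l1 + l2 - l3 + l5 ∧
    0 ≤ (l1 + l5) * (l2 + l5) * (l3 + l4) / (l1 + l2 - l3 + l5) ∧
    0 ≤ -((l1 + l5) * (l2 + l5) * (l1 + l2 + l4 + l5)) / (2 * (l1 + l2 - l3 + l5)) ∧
    0 ≤ -((l3 + l4) * (l1 + l2 + l4 + l5)) / 2 ∧
    let a : ℝ := (1 / 2) * Real.sqrt ((l1 + l5) * (l2 + l5) * (l3 + l4) / (l1 + l2 - l3 + l5))
    let b : ℝ := Real.sqrt (-((l1 + l5) * (l2 + l5) * (l1 + l2 + l4 + l5)) / (2 * (l1 + l2 - l3 + l5)))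
    let c : ℝ := Real.sqrt (-((l3 + l4) * (l1 + l2 + l4 + l5)) / 2)
    let L2 : Matrix (Fin 5) (Fin 5) ℝ :=
      !![0, a, b, a, -l5;
         a, 0, c, -l4, a;
         b, c, l1 + l2 + l3 + l4 + l5, c, b;
         a, -l4, c, 0, a;
         -l5, a, b, a, 0]
    (∀ i j, 0 ≤ L2 i j) ∧ L2 = L2ᵀ ∧ L2 * J5 = J5 * L2 ∧
      L2.charpoly = (X - C l1) * (X - C l2) * (X - C l3) * (X - C l4) * (X - C l5) := by
  have hD : 0 < l1 + l2 - l3 + l5 := by linarith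
  have hD0 : l1 + l2 - l3 + l5 ≠ 0 := ne_of_gt hD
  have h15 : 0 ≤ l1 + l5 := by linarith
  have hq : (0:ℝ) < (l2 + l5) * (l3 + l4) := mul_pos_of_neg_of_neg h25 h34
  have hn1 : 0 ≤ (l1 + l5) * (l2 + l5) * (l3 + l4) := by
    nlinarith [mul_nonneg h15 hq.le]
  have hn2 : 0 ≤ -((l1 + l5) * (l2 + l5) * (l1 + l2 + l4 + l5)) := by
    nlinarith [mul_nonneg h15 (mul_nonneg (neg_nonneg.2 h25.le) h1245)]
  have hn3 : 0 ≤ -((l3 + l4) * (l1 + l2 + l4 + l5)) := by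
    nlinarith [mul_nonneg (neg_nonneg.2 h34.le) h1245]
  have ht1 : 0 ≤ (l1 + l5) * (l2 + l5) * (l3 + l4) / (l1 + l2 - l3 + l5) :=
    div_nonneg hn1 hD.le
  have ht2 : 0 ≤ -((l1 + l5) * (l2 + l5) * (l1 + l2 + l4 + l5)) / (2 * (l1 + l2 - l3 + l5)) :=
    div_nonneg hn2 (by linarith)
  have ht3 : 0 ≤ -((l3 + l4) * (l1 + l2 + l4 + l5)) / 2 :=
    div_nonneg hn3 (by norm_num)
  refine ⟨hD, ht1, ht2, ht3, ?_⟩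
  intro a b c L2
  have ha' : a = (1 / 2) * Real.sqrt ((l1 + l5) * (l2 + l5) * (l3 + l4) / (l1 + l2 - l3 + l5)) := rfl
  have hb' : b = Real.sqrt (-((l1 + l5) * (l2 + l5) * (l1 + l2 + l4 + l5)) / (2 * (l1 + l2 - l3 + l5))) := rfl
  have hc' : c = Real.sqrt (-((l3 + l4) * (l1 + l2 + l4 + l5)) / 2) := rfl
  have hL2 : L2 = !![0, a, b, a, -l5;
         a, 0, c, -l4, a;
         b, c, l1 + l2 + l3 + l4 + l5, c, b;
         a, -l4, c, 0, a;
         -l5, a, b, a, 0] := rfl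
  have ha0 : 0 ≤ a := by rw [ha']; positivity
  have hb0 : 0 ≤ b := Real.sqrt_nonneg _
  have hc0 : 0 ≤ c := Real.sqrt_nonneg _
  have ha2 : a ^ 2 = (l1 + l5) * (l2 + l5) * (l3 + l4) / (4 * (l1 + l2 - l3 + l5)) := by
    rw [ha', mul_pow, Real.sq_sqrt ht1, show ((1:ℝ)/2)^2 = 1/4 from by norm_num,
      div_mul_div_comm, one_mul]
  have hb2 : b ^ 2 = -((l1 + l5) * (l2 + l5) * (l1 + l2 + l4 + l5)) / (2 * (l1 + l2 - l3 + l5)) := by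
    rw [hb', Real.sq_sqrt ht2]
  have hc2 : c ^ 2 = -((l3 + l4) * (l1 + l2 + l4 + l5)) / 2 := by
    rw [hc', Real.sq_sqrt ht3]
  have hg : 0 ≤ (l1 + l5) * (l2 + l5) * (l3 + l4) * (l1 + l2 + l4 + l5) := by
    nlinarith [mul_nonneg hn1 h1245]
  have hg2 : 0 ≤ (l1 + l5) * (l2 + l5) * (l3 + l4) * (l1 + l2 + l4 + l5) / (2 * (l1 + l2 - l3 + l5)) :=
    div_nonneg hg (by linarith)
  have habc : a * b * c =
      (l1 + l5) * (l2 + l5) * (l3 + l4) * (l1 + l2 + l4 + l5) / (4 * (l1 + l2 - l3 + l5)) := by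
    rw [ha', hb', hc']
    rw [show (1 / 2) * Real.sqrt ((l1 + l5) * (l2 + l5) * (l3 + l4) / (l1 + l2 - l3 + l5)) *
        Real.sqrt (-((l1 + l5) * (l2 + l5) * (l1 + l2 + l4 + l5)) / (2 * (l1 + l2 - l3 + l5))) *
        Real.sqrt (-((l3 + l4) * (l1 + l2 + l4 + l5)) / 2) =
        (1 / 2) * (Real.sqrt ((l1 + l5) * (l2 + l5) * (l3 + l4) / (l1 + l2 - l3 + l5)) *
          Real.sqrt (-((l1 + l5) * (l2 + l5) * (l1 + l2 + l4 + l5)) / (2 * (l1 + l2 - l3 + l5))) *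
          Real.sqrt (-((l3 + l4) * (l1 + l2 + l4 + l5)) / 2)) from by ring]
    rw [← Real.sqrt_mul ht1, ← Real.sqrt_mul (mul_nonneg ht1 ht2)]
    rw [show (l1 + l5) * (l2 + l5) * (l3 + l4) / (l1 + l2 - l3 + l5) *
        (-((l1 + l5) * (l2 + l5) * (l1 + l2 + l4 + l5)) / (2 * (l1 + l2 - l3 + l5))) *
        (-((l3 + l4) * (l1 + l2 + l4 + l5)) / 2) =
        ((l1 + l5) * (l2 + l5) * (l3 + l4) * (l1 + l2 + l4 + l5) / (2 * (l1 + l2 - l3 + l5))) ^ 2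
        from by rw [div_mul_div_comm, div_mul_div_comm, div_pow]; congr 1 <;> ring]
    rw [Real.sqrt_sq hg2, div_mul_div_comm, one_mul,
      show (2:ℝ)*(2*(l1+l2-l3+l5)) = 4*(l1+l2-l3+l5) from by ring]
  -- the two key symmetric-function identities
  have h2 : 4 * a ^ 2 + 2 * b ^ 2 + 2 * c ^ 2 =
      l4 * l5 - l5 * (l1 + l2 + l3 + l4 + l5) - l4 * (l1 + l2 + l3 + l4 + l5) -
        (l1 * l2 + l1 * l3 + l2 * l3) := by
    rw [ha2, hb2, hc2]
    field_simp [hD0]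
    ring
  have h3 : 8 * (a * b * c) =
      l1 * l2 * l3 - l4 * l5 * (l1 + l2 + l3 + l4 + l5) - 2 * l5 * c ^ 2 - 2 * l4 * b ^ 2 +
        4 * a ^ 2 * (l1 + l2 + l3 + l4 + l5) := by
    rw [ha2, hb2, hc2, habc]
    field_simp [hD0]
    ring
  refine ⟨?_, ?_, ?_, ?_⟩
  · intro i j
    fin_cases i <;> fin_cases j <;>
      simp [hL2, Matrix.vecHead, Matrix.vecTail] <;>
      first
        | exact le_refl 0
        | assumption
        | linarith
  · ext i j
    fin_cases i <;> fin_cases j <;> rfl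
  · have hJ : J5 = !![0,0,0,0,1;0,0,0,1,0;0,0,1,0,0;0,1,0,0,0;1,0,0,0,0] := by
      ext i j
      fin_cases i <;> fin_cases j <;> rfl
    rw [← Matrix.ext_iff]
    intro i j
    fin_cases i <;> fin_cases j <;>
      simp [hL2, hJ, Matrix.mul_apply, Fin.sum_univ_five, Matrix.vecHead, Matrix.vecTail]
  · have hcm : charmatrix L2 =
        !![X, -C a, -C b, -C a, C l5;
           -C a, X, -C c, C l4, -C a;
           -C b, -C c, X - (C l1 + C l2 + C l3 + C l4 + C l5), -C c, -C b;
           -C a, C l4, -C c, X, -C a;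
           C l5, -C a, -C b, -C a, X] := by
      rw [← Matrix.ext_iff]
      intro i j
      fin_cases i <;> fin_cases j <;>
        simp [hL2, charmatrix_apply, Matrix.diagonal_apply, Fin.ext_iff, map_add, map_neg] <;>
        decide
    rw [Matrix.charpoly, hcm]
    have h2C : (4 : ℝ[X]) * (C a) ^ 2 + 2 * (C b) ^ 2 + 2 * (C c) ^ 2 =
        C l4 * C l5 - C l5 * (C l1 + C l2 + C l3 + C l4 + C l5) -
          C l4 * (C l1 + C l2 + C l3 + C l4 + C l5) -
          (C l1 * C l2 + C l1 * C l3 + C l2 * C l3) := by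
      have := congrArg C h2
      simp only [map_add, _root_.map_mul, map_pow, map_ofNat, map_sub] at this
      exact this
    have h3C : (8 : ℝ[X]) * (C a * C b * C c) =
        C l1 * C l2 * C l3 - C l4 * C l5 * (C l1 + C l2 + C l3 + C l4 + C l5) -
          2 * C l5 * (C c) ^ 2 - 2 * C l4 * (C b) ^ 2 +
          4 * (C a) ^ 2 * (C l1 + C l2 + C l3 + C l4 + C l5) := by
      have := congrArg C h3
      simp only [map_add, _root_.map_mul, map_pow, map_ofNat, map_sub] at this
      exact this
    simp [Matrix.det_succ_row_zero, Fin.sum_univ_succ, Fin.succAbove, Fin.castSucc,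
      Fin.castAdd, Fin.castLE, Matrix.submatrix_apply, Matrix.cons_val_zero, Matrix.cons_val_one,
      Matrix.head_cons, Matrix.head_fin_const, Matrix.cons_val_succ]
    linear_combination (-(X - C l4) * (X - C l5) * X) * h2C - ((X - C l4) * (X - C l5)) * h3C
end

section
/- Let 1 ≥ λ2 ≥ λ3 > 0 > λ4 ≥ λ5 ≥ −1 be real numbers such that 1 + λ2 + λ3 + λ4 + λ5 > 0 and 1 + λ2 + λ4 + λ5 < 0. If λ2·λ4 − λ3·λ5 − λ3 − λ5 ≥ −λ3·λ5/(1 + λ3 + λ5), then there exists a 5×5 nonnegative bisymmetric real matrix whose spectrum is 1, λ2, λ3, λ4, λ5. -/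
set_option maxHeartbeats 1000000
set_option maxRecDepth 4000

open Matrix Polynomial

theorem stmt_12 (l2 l3 l4 l5 : ℝ)
    (h12 : 1 ≥ l2) (h23 : l2 ≥ l3) (h3 : l3 > 0) (h4 : 0 > l4) (h45 : l4 ≥ l5)
    (h5 : l5 ≥ -1)
    (hsum : 1 + l2 + l3 + l4 + l5 > 0)
    (hneg : 1 + l2 + l4 + l5 < 0)
    (hineq : l2 * l4 - l3 * l5 - l3 - l5 ≥ -(l3 * l5) / (1 + l3 + l5)) :
    ∃ Q : Matrix (Fin 5) (Fin 5) ℝ,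
      (∀ i j, 0 ≤ Q i j) ∧ Q = Qᵀ ∧ Q * J5 = J5 * Q ∧
      Q.charpoly = (X - C 1) * (X - C l2) * (X - C l3) * (X - C l4) * (X - C l5) := by
  have hd0 : 0 < 1 + l3 + l5 := by linarith
  have hl5 : l5 < 0 := by linarith
  have hl2 : 0 < l2 := by linarith
  have hw0 : 0 ≤ -(l2 * l4) := by nlinarith
  have hc0 : 0 ≤ -(l3 * l5) / (2 * (1 + l3 + l5)) := by
    apply div_nonneg; nlinarith; linarith
  have hrw : -(l3 * l5) / (1 + l3 + l5) = -(l3 * l5 / (1 + l3 + l5)) := by ring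
  have hs0 : -(l2 * l4) ≤ -(l3 + l5 + l3 * l5) + l3 * l5 / (1 + l3 + l5) := by
    rw [hrw] at hineq; linarith
  set w : ℝ := Real.sqrt (-(l2 * l4)) with hw_def
  set s : ℝ := Real.sqrt (-(l3 + l5 + l3 * l5) + l3 * l5 / (1 + l3 + l5)) with hs_def
  set c : ℝ := Real.sqrt (-(l3 * l5) / (2 * (1 + l3 + l5))) with hc_def
  have hw2 : w ^ 2 = -(l2 * l4) := Real.sq_sqrt hw0
  have hs2 : s ^ 2 = -(l3 + l5 + l3 * l5) + l3 * l5 / (1 + l3 + l5) :=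
    Real.sq_sqrt (le_trans hw0 hs0)
  have hc2 : c ^ 2 = -(l3 * l5) / (2 * (1 + l3 + l5)) := Real.sq_sqrt hc0
  have hwpos : 0 ≤ w := Real.sqrt_nonneg _
  have hspos : 0 ≤ s := Real.sqrt_nonneg _
  have hcpos : 0 ≤ c := Real.sqrt_nonneg _
  have hws : w ≤ s := Real.sqrt_le_sqrt hs0
  have H4 : s ^ 2 + 2 * c ^ 2 = -(l3 + l5 + l3 * l5) := by
    rw [hs2, hc2]; field_simp; ring
  have H5 : 2 * c ^ 2 * (1 + l3 + l5) = -(l3 * l5) := by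
    rw [hc2]; field_simp
  set Qm : Matrix (Fin 5) (Fin 5) ℝ := !![0, (s+w)/2, c, (s-w)/2, 0;
            (s+w)/2, (1+l2+l3+l4+l5)/2, 0, (1+l3+l5-l2-l4)/2, (s-w)/2;
            c, 0, 0, 0, c;
            (s-w)/2, (1+l3+l5-l2-l4)/2, 0, (1+l2+l3+l4+l5)/2, (s+w)/2;
            0, (s-w)/2, c, (s+w)/2, 0] with hQm
  refine ⟨Qm, ?_, ?_, ?_, ?_⟩
  · intro i j
    fin_cases i <;> fin_cases j <;> simp [hQm] <;> linarith
  · ext i j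
    fin_cases i <;> fin_cases j <;> simp [hQm]
  · have hJ : J5 = !![0,0,0,0,1; 0,0,0,1,0; 0,0,1,0,0; 0,1,0,0,0; 1,0,0,0,0] := by
      ext i j; fin_cases i <;> fin_cases j <;> norm_num [J5]
    rw [hJ]
    ext i j
    fin_cases i <;> fin_cases j <;>
      simp [hQm, Matrix.mul_apply, Fin.sum_univ_five, Matrix.vecHead, Matrix.vecTail]
  · apply Polynomial.funext
    intro x
    have h1 : Polynomial.eval x Qm.charpoly =
        ((charmatrix Qm).map (Polynomial.evalRingHom x)).det := by
      rw [Matrix.charpoly]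
      exact RingHom.map_det (Polynomial.evalRingHom x) Qm.charmatrix
    rw [h1]
    have h2 : (charmatrix Qm).map (Polynomial.evalRingHom x) =
        !![x - 0, -((s+w)/2), -c, -((s-w)/2), -0;
           -((s+w)/2), x - (1+l2+l3+l4+l5)/2, -0, -((1+l3+l5-l2-l4)/2), -((s-w)/2);
           -c, -0, x - 0, -0, -c;
           -((s-w)/2), -((1+l3+l5-l2-l4)/2), -0, x - (1+l2+l3+l4+l5)/2, -((s+w)/2);
           -0, -((s-w)/2), -c, -((s+w)/2), x - 0] := by
      ext i j
      fin_cases i <;> fin_cases j <;>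
        simp [hQm, charmatrix_apply, Matrix.map_apply]
    rw [h2]
    simp only [Matrix.det_succ_row_zero, Fin.sum_univ_succ, Matrix.submatrix_apply,
      Fin.succ_zero_eq_one, Fin.succ_one_eq_two, Matrix.submatrix_submatrix,
      Matrix.det_unique, Fin.default_eq_zero, Function.comp_apply, Finset.univ_unique,
      Fin.val_zero, Fin.val_succ, Fin.zero_succAbove, Fin.val_eq_zero,
      Fin.succ_succAbove_zero, Fin.succ_succAbove_one, Finset.sum_singleton,
      Fin.succ_succAbove_succ, Matrix.cons_val', Matrix.cons_val_zero, Matrix.cons_val_one,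
      Matrix.head_cons, Matrix.head_fin_const, Matrix.cons_val_fin_one, Matrix.cons_val_succ,
      Matrix.empty_val', Matrix.cons_val_zero, Polynomial.eval_mul, Polynomial.eval_sub,
      Polynomial.eval_X, Polynomial.eval_C, Polynomial.eval_one]
    norm_num [Fin.succAbove, Fin.castSucc, Fin.castAdd, Fin.castLE, Fin.succ, Fin.lt_def,
      Matrix.cons_val_zero, Matrix.cons_val_one, Matrix.head_cons, Matrix.cons_val_two,
      Matrix.cons_val_three, Matrix.cons_val_four, Matrix.vecHead, Matrix.vecTail]
    linear_combination
      (-(x^3 - (1+l3+l5)*x^2 - (s^2+2*c^2)*x + 2*c^2*(1+l3+l5))) * hw2 +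
      (-((x^2 - (l2+l4)*x + l2*l4)*x)) * H4 +
      (x^2 - (l2+l4)*x + l2*l4) * H5
end

section
/- Let 1 ≥ λ2 ≥ λ3 > 0 > λ4 ≥ λ5 ≥ −1 be real numbers such that 1 + λ2 + λ3 + λ4 + λ5 = 0, 1 + λ2³ + λ3³ + λ4³ + λ5³ ≥ 0 and 1 + λ2 + λ4 + λ5 < 0. Then there exist real numbers a ≥ 0 and b ≥ 0 such that a² + b² = λ2·λ4 − λ3·λ5 − λ3 − λ5 and −(λ2+λ4)·b² − 2ab·√(−λ2·λ4) = −λ3·λ5. -/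
private lemma aux_sum_nonneg (x y : ℝ) (hy : 0 ≤ y) (h : x ^ 2 ≤ y ^ 2) : 0 ≤ x + y := by
  nlinarith [sq_nonneg (x + y), sq_nonneg (x - y)]

private lemma aux_abs_le_one (C S : ℝ) (h : C ^ 2 + S ^ 2 = 1) : -1 ≤ C ∧ C ≤ 1 := by
  constructor <;> nlinarith [sq_nonneg S, sq_nonneg (C + 1), sq_nonneg (C - 1)]

set_option maxHeartbeats 1000000 in
theorem stmt_14 (l2 l3 l4 l5 : ℝ)
    (h12 : 1 ≥ l2) (h23 : l2 ≥ l3) (h3 : l3 > 0) (h4 : 0 > l4) (h45 : l4 ≥ l5)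
    (h5 : l5 ≥ -1)
    (hsum : 1 + l2 + l3 + l4 + l5 = 0)
    (hcube : 1 + l2 ^ 3 + l3 ^ 3 + l4 ^ 3 + l5 ^ 3 ≥ 0)
    (hneg : 1 + l2 + l4 + l5 < 0) :
    ∃ a b : ℝ, a ≥ 0 ∧ b ≥ 0 ∧
      a ^ 2 + b ^ 2 = l2 * l4 - l3 * l5 - l3 - l5 ∧
      -(l2 + l4) * b ^ 2 - 2 * a * b * Real.sqrt (-(l2 * l4)) = -(l3 * l5) := by
  have hl2 : 0 < l2 := lt_of_lt_of_le h3 h23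
  have hl5 : l5 < 0 := lt_of_le_of_lt h45 h4
  have hP : l3 * l5 ≤ 0 := by
    have := mul_pos h3 (show (0:ℝ) < -l5 by linarith)
    linarith
  obtain ⟨Q, hQdef⟩ : ∃ Q : ℝ, Q = l2 * l4 - l3 * l5 - l3 - l5 := ⟨_, rfl⟩
  have hQ : 0 < Q := by
    rw [hQdef]
    nlinarith [mul_nonneg (show (0:ℝ) ≤ 1 + l2 by linarith) (show (0:ℝ) ≤ 1 + l4 by linarith),
      mul_pos h3 (show (0:ℝ) < -l5 by linarith)]
  obtain ⟨t, htdef⟩ : ∃ t : ℝ, t = l2 + l4 := ⟨_, rfl⟩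
  have ht : t < 0 := by rw [htdef]; linarith
  obtain ⟨α, hαdef⟩ : ∃ α : ℝ, α = -t / 2 := ⟨_, rfl⟩
  have hα : 0 < α := by rw [hαdef]; linarith
  have hp : 0 ≤ -(l2 * l4) := by
    have := mul_pos hl2 (show (0:ℝ) < -l4 by linarith)
    linarith
  obtain ⟨β, hβdef⟩ : ∃ β : ℝ, β = Real.sqrt (-(l2 * l4)) := ⟨_, rfl⟩
  have hβ0 : 0 ≤ β := hβdef ▸ Real.sqrt_nonneg _
  have hβ2 : β ^ 2 = -(l2 * l4) := hβdef ▸ Real.sq_sqrt hp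
  obtain ⟨R, hRdef⟩ : ∃ R : ℝ, R = (l2 - l4) / 2 := ⟨_, rfl⟩
  have hR : 0 < R := by rw [hRdef]; linarith
  have hR2 : R ^ 2 = α ^ 2 + β ^ 2 := by
    rw [hβ2, hRdef, hαdef, htdef]; ring
  -- key inequality from hcube
  have key : t * Q ≤ l3 * l5 := by
    have h3e : l3 = -(1 + l2 + l4 + l5) := by linarith
    rw [h3e] at hcube
    rw [hQdef, htdef, h3e]
    nlinarith [hcube]
  obtain ⟨m, hmdef⟩ : ∃ m : ℝ, m = l3 * l5 / Q := ⟨_, rfl⟩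
  have hm0 : m ≤ 0 := by
    rw [hmdef]
    exact div_nonpos_of_nonpos_of_nonneg hP hQ.le
  have hmt : t ≤ m := by
    rw [hmdef, le_div_iff₀ hQ]; linarith [key]
  have hmQ : m * Q = l3 * l5 := by
    rw [hmdef]; field_simp
  obtain ⟨k, hkdef⟩ : ∃ k : ℝ, k = m - t / 2 := ⟨_, rfl⟩
  have hk1 : k ≤ α := by rw [hkdef, hαdef]; linarith
  have hk2 : -α ≤ k := by rw [hkdef, hαdef]; linarith
  have hkα2 : k ^ 2 ≤ α ^ 2 := sq_le_sq' hk2 hk1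
  have hαR : α ≤ R := by rw [hαdef, hRdef, htdef]; linarith
  have hkR2 : k ^ 2 ≤ R ^ 2 := sq_le_sq' (by linarith) (by linarith)
  obtain ⟨D, hDdef⟩ : ∃ D : ℝ, D = Real.sqrt (R ^ 2 - k ^ 2) := ⟨_, rfl⟩
  have hD0 : 0 ≤ D := hDdef ▸ Real.sqrt_nonneg _
  have hD2 : D ^ 2 = R ^ 2 - k ^ 2 := hDdef ▸ Real.sq_sqrt (by linarith)
  obtain ⟨C, hCdef⟩ : ∃ C : ℝ, C = (k * α - β * D) / R ^ 2 := ⟨_, rfl⟩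
  obtain ⟨S, hSdef⟩ : ∃ S : ℝ, S = (k * β + α * D) / R ^ 2 := ⟨_, rfl⟩
  have hR2ne : (R:ℝ) ^ 2 ≠ 0 := by positivity
  have hsq : (k * β) ^ 2 ≤ (α * D) ^ 2 := by
    have hβ2' : β ^ 2 = R ^ 2 - α ^ 2 := by linarith [hR2]
    rw [mul_pow, mul_pow, hβ2', hD2]
    have h1 : 0 ≤ (α ^ 2 - k ^ 2) * R ^ 2 :=
      mul_nonneg (by linarith) (sq_nonneg R)
    nlinarith [h1]
  have hS0 : 0 ≤ S := by
    rw [hSdef]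
    apply div_nonneg _ (by positivity)
    exact aux_sum_nonneg _ _ (mul_nonneg hα.le hD0) hsq
  have hCS : C ^ 2 + S ^ 2 = 1 := by
    have h1 : C ^ 2 + S ^ 2 = ((k ^ 2 + D ^ 2) * (α ^ 2 + β ^ 2)) / (R ^ 2) ^ 2 := by
      rw [hCdef, hSdef]; ring
    rw [h1, hD2, ← hR2, div_eq_one_iff_eq (by positivity)]; ring
  have hlin : α * C + β * S = k := by
    have h1 : α * C + β * S = (k * (α ^ 2 + β ^ 2)) / R ^ 2 := by
      rw [hCdef, hSdef]; ring
    rw [h1, ← hR2]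
    field_simp
  obtain ⟨hC2, hC1⟩ := aux_abs_le_one C S hCS
  have h1C : 0 ≤ Q * (1 + C) / 2 :=
    div_nonneg (mul_nonneg hQ.le (by linarith)) (by norm_num)
  have h1C' : 0 ≤ Q * (1 - C) / 2 :=
    div_nonneg (mul_nonneg hQ.le (by linarith)) (by norm_num)
  refine ⟨Real.sqrt (Q * (1 + C) / 2), Real.sqrt (Q * (1 - C) / 2),
    Real.sqrt_nonneg _, Real.sqrt_nonneg _, ?_, ?_⟩
  · rw [Real.sq_sqrt h1C, Real.sq_sqrt h1C', ← hQdef]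
    ring
  · have hab : Real.sqrt (Q * (1 + C) / 2) * Real.sqrt (Q * (1 - C) / 2) = Q * S / 2 := by
      rw [← Real.sqrt_mul h1C]
      have h2 : Q * (1 + C) / 2 * (Q * (1 - C) / 2) = (Q * S / 2) ^ 2 := by
        linear_combination (-(Q ^ 2) / 4) * hCS
      rw [h2, Real.sqrt_sq (by positivity)]
    rw [Real.sq_sqrt h1C', ← hβdef]
    rw [show 2 * Real.sqrt (Q * (1 + C) / 2) * Real.sqrt (Q * (1 - C) / 2) * β
        = 2 * (Q * S / 2) * β by rw [mul_assoc 2, hab]]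
    rw [← htdef]
    calc -t * (Q * (1 - C) / 2) - 2 * (Q * S / 2) * β
        = Q * (α - (α * C + β * S)) := by rw [hαdef]; ring
      _ = Q * (α - k) := by rw [hlin]
      _ = -(l3 * l5) := by rw [hkdef, hαdef]; linear_combination -hmQ
end

section
/- Let λ2, λ3, λ4, λ5 be real numbers with λ2 > 0 > λ4 and 1 + λ2 + λ3 + λ4 + λ5 = 0, and suppose real numbers a, b satisfy a² + b² = λ2·λ4 − λ3·λ5 − λ3 − λ5 and −(λ2+λ4)·b² − 2ab·√(−λ2·λ4) = −λ3·λ5. Then the 3×3 symmetric matrix U with rows (0, a, b), (a, −(λ2+λ4), √(−λ2·λ4)), (b, √(−λ2·λ4), 0) has characteristic polynomial (X − 1)(X − λ3)(X − λ5). -/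
open Matrix Polynomial

theorem stmt_15 (l2 l3 l4 l5 a b : ℝ)
    (h2 : l2 > 0) (h4 : 0 > l4)
    (hsum : 1 + l2 + l3 + l4 + l5 = 0)
    (heq1 : a ^ 2 + b ^ 2 = l2 * l4 - l3 * l5 - l3 - l5)
    (heq2 : -(l2 + l4) * b ^ 2 - 2 * a * b * Real.sqrt (-(l2 * l4)) = -(l3 * l5)) :
    let U : Matrix (Fin 3) (Fin 3) ℝ :=
      !![0, a, b;
         a, -(l2 + l4), Real.sqrt (-(l2 * l4));
         b, Real.sqrt (-(l2 * l4)), 0]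
    U.charpoly = (X - C 1) * (X - C l3) * (X - C l5) := by
  intro U
  have hsq : Real.sqrt (-(l2*l4)) ^ 2 = -(l2*l4) := Real.sq_sqrt (by nlinarith)
  set s := Real.sqrt (-(l2*l4)) with hsdef
  have Hsum : (1 : ℝ[X]) + C l2 + C l3 + C l4 + C l5 = 0 := by
    have := congrArg C hsum; simpa using this
  have H1 : (C a)^2 + (C b)^2 = C l2 * C l4 - C l3 * C l5 - C l3 - C l5 := by
    have := congrArg C heq1; simpa [map_add, map_sub, _root_.map_mul, map_pow] using this
  have Hs : (C s)^2 = -(C l2 * C l4) := by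
    have := congrArg C hsq; simpa [map_neg, _root_.map_mul, map_pow] using this
  have H2 : -(C l2 + C l4) * (C b)^2 - 2 * C a * C b * C s = -(C l3 * C l5) := by
    have := congrArg C heq2
    simpa [map_add, map_sub, _root_.map_mul, map_pow, map_neg, map_ofNat] using this
  rw [Matrix.charpoly, Matrix.det_fin_three]
  simp only [charmatrix_apply, U, Matrix.diagonal_apply, Matrix.cons_val', Matrix.cons_val_zero,
    Matrix.cons_val_one, Matrix.head_cons, Matrix.empty_val', Matrix.cons_val_fin_one,
    Matrix.head_fin_const, Matrix.cons_val_two, Matrix.tail_cons, Matrix.map_apply,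
    RingHom.mapMatrix_apply, Matrix.of_apply, ← hsdef]
  norm_num [Fin.ext_iff]
  linear_combination (X^2) * Hsum - X * H1 - X * Hs + H2
end

section
/- Let p be a real number, x = (x1, x2) ∈ ℝ², and let X and Y be symmetric 2×2 real matrices. Let J₂ be the 2×2 exchange matrix (rows (0,1),(1,0)), set A = (X+Y)/2 and C = J₂(X−Y)/2, and let Q be the 5×5 matrix given in block form by Q = [[A, x/√2, J₂CJ₂], [xᵀ/√2, p, xᵀJ₂/√2], [C, J₂x/√2, J₂AJ₂]] (with x regarded as a 2×1 column). Then: (i) Q is bisymmetric; (ii) the characteristic polynomial of Q equals the product of the characteristic polynomial of the 3×3 matrix M = [[p, xᵀ],[x, X]] and the characteristic polynomial of Y; and (iii) Q is nonnegative if and only if p ≥ 0, x1 ≥ 0, x2 ≥ 0, and the matrices X+Y and X−Y are nonnegative. -/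
set_option maxHeartbeats 4000000

open Matrix Polynomial

noncomputable def Pm : Matrix (Fin 5) (Fin 5) ℝ :=
  let c : ℝ := (Real.sqrt 2)⁻¹
  !![0, 0, 1, 0, 0;
     c, 0, 0, 0, c;
     0, c, 0, c, 0;
     c, 0, 0, 0, -c;
     0, c, 0, -c, 0]

lemma hcc : (Real.sqrt 2)⁻¹ * (Real.sqrt 2)⁻¹ = 2⁻¹ := by
  rw [← mul_inv, Real.mul_self_sqrt (by norm_num)]

lemma Pm_mul_transpose : Pm * Pmᵀ = 1 := by
  ext i j
  fin_cases i <;> fin_cases j <;>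
    · simp only [Pm, Matrix.mul_apply, Matrix.transpose_apply, Fin.sum_univ_five]
      norm_num [Matrix.one_apply, Matrix.cons_val_zero, Matrix.cons_val_one,
        Matrix.cons_val_two, Matrix.cons_val_three, Matrix.cons_val_four,
        Matrix.head_cons, Matrix.vecHead, Matrix.vecTail, hcc, Fin.ext_iff]

lemma Pm_transpose_mul : Pmᵀ * Pm = 1 := by
  ext i j
  fin_cases i <;> fin_cases j <;>
    · simp only [Pm, Matrix.mul_apply, Matrix.transpose_apply, Fin.sum_univ_five]
      norm_num [Matrix.one_apply, Matrix.cons_val_zero, Matrix.cons_val_one,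
        Matrix.cons_val_two, Matrix.cons_val_three, Matrix.cons_val_four,
        Matrix.head_cons, Matrix.vecHead, Matrix.vecTail, hcc, Fin.ext_iff]

lemma charpoly_conj5 (P Q : Matrix (Fin 5) (Fin 5) ℝ) (h1 : P * Pᵀ = 1) (h2 : Pᵀ * P = 1) :
    (P * Q * Pᵀ).charpoly = Q.charpoly := by
  have hc : ∀ N : Matrix (Fin 5) (Fin 5) ℝ[X],
      Matrix.scalar (Fin 5) (X : ℝ[X]) * N = N * Matrix.scalar (Fin 5) (X : ℝ[X]) :=
    fun N => (scalar_commute (X : ℝ[X]) (fun r => Commute.all _ _) N).eq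
  have key : charmatrix (P * Q * Pᵀ) =
      (C : ℝ →+* ℝ[X]).mapMatrix P * charmatrix Q * (C : ℝ →+* ℝ[X]).mapMatrix Pᵀ := by
    simp only [charmatrix, mul_sub, sub_mul]
    congr 1
    · rw [show ((C : ℝ →+* ℝ[X]).mapMatrix P) * Matrix.scalar (Fin 5) (X : ℝ[X])
          = Matrix.scalar (Fin 5) (X : ℝ[X]) * (C : ℝ →+* ℝ[X]).mapMatrix P from (hc _).symm,
        mul_assoc, ← _root_.map_mul, h1, _root_.map_one, mul_one]
    · rw [← _root_.map_mul, ← _root_.map_mul]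
  have hd : ((C : ℝ →+* ℝ[X]).mapMatrix P).det * ((C : ℝ →+* ℝ[X]).mapMatrix Pᵀ).det = 1 := by
    rw [← det_mul, ← _root_.map_mul, h1, _root_.map_one, det_one]
  calc (P * Q * Pᵀ).charpoly
      = ((C : ℝ →+* ℝ[X]).mapMatrix P).det * (charmatrix Q).det
        * ((C : ℝ →+* ℝ[X]).mapMatrix Pᵀ).det := by rw [charpoly, key, det_mul, det_mul]
    _ = ((C : ℝ →+* ℝ[X]).mapMatrix P).det * ((C : ℝ →+* ℝ[X]).mapMatrix Pᵀ).det
        * (charmatrix Q).det := by ring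
    _ = Q.charpoly := by rw [hd, one_mul, charpoly]

lemma block_reindex (M3 : Matrix (Fin 3) (Fin 3) ℝ) (M2 : Matrix (Fin 2) (Fin 2) ℝ) :
    (!![M3 0 0, M3 0 1, M3 0 2, 0, 0;
        M3 1 0, M3 1 1, M3 1 2, 0, 0;
        M3 2 0, M3 2 1, M3 2 2, 0, 0;
        0, 0, 0, M2 0 0, M2 0 1;
        0, 0, 0, M2 1 0, M2 1 1] : Matrix (Fin 5) (Fin 5) ℝ) =
      Matrix.reindex finSumFinEquiv finSumFinEquiv (Matrix.fromBlocks M3 0 0 M2) := by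
  ext i j
  fin_cases i <;> fin_cases j <;>
    simp [Matrix.reindex_apply, Matrix.submatrix_apply, finSumFinEquiv, Matrix.fromBlocks,
      Fin.addCases, Fin.ext_iff, Fin.subNat, Fin.castLT] <;> rfl

theorem stmt_16 (p x1 x2 : ℝ) (Xm Ym : Matrix (Fin 2) (Fin 2) ℝ)
    (hX : Xm = Xmᵀ) (hY : Ym = Ymᵀ) :
    let J2 : Matrix (Fin 2) (Fin 2) ℝ := !![0, 1; 1, 0]
    let A : Matrix (Fin 2) (Fin 2) ℝ := (2⁻¹ : ℝ) • (Xm + Ym)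
    let Cm : Matrix (Fin 2) (Fin 2) ℝ := (2⁻¹ : ℝ) • (J2 * (Xm - Ym))
    let Q : Matrix (Fin 5) (Fin 5) ℝ :=
      !![A 0 0, A 0 1, x1 / Real.sqrt 2, (J2 * Cm * J2) 0 0, (J2 * Cm * J2) 0 1;
         A 1 0, A 1 1, x2 / Real.sqrt 2, (J2 * Cm * J2) 1 0, (J2 * Cm * J2) 1 1;
         x1 / Real.sqrt 2, x2 / Real.sqrt 2, p, x2 / Real.sqrt 2, x1 / Real.sqrt 2;
         Cm 0 0, Cm 0 1, x2 / Real.sqrt 2, (J2 * A * J2) 0 0, (J2 * A * J2) 0 1;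
         Cm 1 0, Cm 1 1, x1 / Real.sqrt 2, (J2 * A * J2) 1 0, (J2 * A * J2) 1 1]
    let M : Matrix (Fin 3) (Fin 3) ℝ :=
      !![p, x1, x2;
         x1, Xm 0 0, Xm 0 1;
         x2, Xm 1 0, Xm 1 1]
    (Q = Qᵀ ∧ Q * J5 = J5 * Q) ∧
    Q.charpoly = M.charpoly * Ym.charpoly ∧
    ((∀ i j, 0 ≤ Q i j) ↔
      0 ≤ p ∧ 0 ≤ x1 ∧ 0 ≤ x2 ∧
        (∀ i j, 0 ≤ (Xm + Ym) i j) ∧ (∀ i j, 0 ≤ (Xm - Ym) i j)) := by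
  intro J2 A Cm Q M
  have hx : Xm 1 0 = Xm 0 1 := congrFun (congrFun hX 1) 0
  have hy : Ym 1 0 = Ym 0 1 := congrFun (congrFun hY 1) 0
  have hs : Real.sqrt 2 * Real.sqrt 2 = 2 := Real.mul_self_sqrt (by norm_num)
  have hs0 : Real.sqrt 2 ≠ 0 := by positivity
  have hs2 : Real.sqrt 2 ^ 2 = 2 := Real.sq_sqrt (by norm_num)
  refine ⟨⟨?_, ?_⟩, ?_, ?_⟩
  · -- Q = Qᵀ
    ext i j
    fin_cases i <;> fin_cases j <;>
      · simp only [Q, A, Cm, J2, Matrix.mul_apply, Matrix.transpose_apply,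
          Fin.sum_univ_two, Matrix.smul_apply, Matrix.add_apply, Matrix.sub_apply,
          Matrix.cons_val_zero, Matrix.cons_val_one, Matrix.cons_val_two,
          Matrix.cons_val_three, Matrix.cons_val_four, Matrix.head_cons,
          Matrix.vecHead, Matrix.vecTail, smul_eq_mul, Function.comp_apply,
          Matrix.of_apply, Matrix.cons_val']
        try norm_num [hx, hy]
  · -- Q * J5 = J5 * Q
    ext i j
    fin_cases i <;> fin_cases j <;>
      · simp only [Q, A, Cm, J2, J5, Matrix.mul_apply, Matrix.of_apply,
          Fin.sum_univ_five, Fin.sum_univ_two, Matrix.smul_apply, Matrix.add_apply,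
          Matrix.sub_apply, Matrix.cons_val_zero, Matrix.cons_val_one, Matrix.cons_val_two,
          Matrix.cons_val_three, Matrix.cons_val_four, Matrix.head_cons,
          Matrix.vecHead, Matrix.vecTail, smul_eq_mul, Function.comp_apply,
          Matrix.of_apply, Matrix.cons_val']
        try norm_num [hx, hy, show (((0:Fin 5)):ℕ) = 0 from rfl,
          show (((1:Fin 5)):ℕ) = 1 from rfl, show (((2:Fin 5)):ℕ) = 2 from rfl,
          show (((3:Fin 5)):ℕ) = 3 from rfl, show (((4:Fin 5)):ℕ) = 4 from rfl]
        try rfl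
  · -- charpoly
    have hD : Pm * Q * Pmᵀ =
        !![M 0 0, M 0 1, M 0 2, 0, 0;
           M 1 0, M 1 1, M 1 2, 0, 0;
           M 2 0, M 2 1, M 2 2, 0, 0;
           0, 0, 0, Ym 0 0, Ym 0 1;
           0, 0, 0, Ym 1 0, Ym 1 1] := by
      ext i j
      fin_cases i <;> fin_cases j <;>
        · simp only [Pm, Q, A, Cm, J2, M, Matrix.mul_apply, Matrix.transpose_apply,
            Fin.sum_univ_five, Fin.sum_univ_two, Matrix.smul_apply, Matrix.add_apply,
            Matrix.sub_apply, Matrix.cons_val_zero, Matrix.cons_val_one,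
            Matrix.cons_val_two, Matrix.cons_val_three, Matrix.cons_val_four,
            Matrix.head_cons, Matrix.vecHead, Matrix.vecTail, smul_eq_mul,
            Function.comp_apply, Matrix.of_apply, Matrix.cons_val']
          try simp [Matrix.vecHead, Matrix.vecTail]
          try field_simp
          try ring_nf
          try simp only [hs2]
          try ring
    calc Q.charpoly = (Pm * Q * Pmᵀ).charpoly :=
          (charpoly_conj5 Pm Q Pm_mul_transpose Pm_transpose_mul).symm
      _ = (Matrix.reindex finSumFinEquiv finSumFinEquiv (Matrix.fromBlocks M 0 0 Ym)).charpoly := by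
          rw [hD, block_reindex]
      _ = M.charpoly * Ym.charpoly := by
          rw [Matrix.charpoly_reindex, Matrix.charpoly_fromBlocks_zero₁₂]
  · -- nonnegativity
    constructor
    · intro h
      have key : ∀ i j, 0 ≤ Q i j → True := fun _ _ _ => trivial
      refine ⟨by simpa [Q] using h 2 2, ?_, ?_, ?_, ?_⟩
      · have h20 := h 2 0
        simp only [Q, Matrix.smul_apply, Matrix.add_apply, Matrix.sub_apply,
            Matrix.mul_apply, Fin.sum_univ_two, smul_eq_mul,
            Matrix.cons_val_zero, Matrix.cons_val_one, Matrix.cons_val_two,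
            Matrix.cons_val_three, Matrix.cons_val_four, Matrix.head_cons,
            Matrix.vecHead, Matrix.vecTail, Function.comp_apply,
            Matrix.of_apply, Matrix.cons_val', Matrix.cons_val_succ,
            Fin.mk_zero, Fin.mk_one] at h20
        have := mul_nonneg h20 (Real.sqrt_nonneg 2)
        rwa [div_mul_cancel₀ _ hs0] at this
      · have h21 := h 2 1
        simp only [Q, Matrix.smul_apply, Matrix.add_apply, Matrix.sub_apply,
            Matrix.mul_apply, Fin.sum_univ_two, smul_eq_mul,
            Matrix.cons_val_zero, Matrix.cons_val_one, Matrix.cons_val_two,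
            Matrix.cons_val_three, Matrix.cons_val_four, Matrix.head_cons,
            Matrix.vecHead, Matrix.vecTail, Function.comp_apply,
            Matrix.of_apply, Matrix.cons_val', Matrix.cons_val_succ,
            Fin.mk_zero, Fin.mk_one] at h21
        have := mul_nonneg h21 (Real.sqrt_nonneg 2)
        rwa [div_mul_cancel₀ _ hs0] at this
      · intro i j
        have h00 := h 0 0; have h01 := h 0 1; have h10 := h 1 0; have h11 := h 1 1
        simp only [Q, A, Matrix.smul_apply, Matrix.add_apply, Matrix.sub_apply,
            Matrix.mul_apply, Fin.sum_univ_two, smul_eq_mul,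
            Matrix.cons_val_zero, Matrix.cons_val_one, Matrix.cons_val_two,
            Matrix.cons_val_three, Matrix.cons_val_four, Matrix.head_cons,
            Matrix.vecHead, Matrix.vecTail, Function.comp_apply,
            Matrix.of_apply, Matrix.cons_val', Matrix.cons_val_succ,
            Fin.mk_zero, Fin.mk_one] at h00 h01 h10 h11
        fin_cases i <;> fin_cases j <;> simp only [Matrix.add_apply, Fin.mk_zero, Fin.mk_one] <;> linarith
      · intro i j
        have h30 := h 3 0; have h31 := h 3 1; have h40 := h 4 0; have h41 := h 4 1
        simp only [Q, Cm, J2, Matrix.smul_apply, Matrix.add_apply, Matrix.sub_apply,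
            Matrix.mul_apply, Fin.sum_univ_two, smul_eq_mul,
            Matrix.cons_val_zero, Matrix.cons_val_one, Matrix.cons_val_two,
            Matrix.cons_val_three, Matrix.cons_val_four, Matrix.head_cons,
            Matrix.vecHead, Matrix.vecTail, Function.comp_apply,
            Matrix.of_apply, Matrix.cons_val', Matrix.cons_val_succ,
            Fin.mk_zero, Fin.mk_one] at h30 h31 h40 h41
        fin_cases i <;> fin_cases j <;> simp only [Matrix.sub_apply, Fin.mk_zero, Fin.mk_one] <;> linarith
    · rintro ⟨hp, hx1, hx2, hXY, hXmY⟩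
      have k00 := hXY 0 0; have k01 := hXY 0 1; have k10 := hXY 1 0; have k11 := hXY 1 1
      have l00 := hXmY 0 0; have l01 := hXmY 0 1; have l10 := hXmY 1 0; have l11 := hXmY 1 1
      simp only [Matrix.add_apply] at k00 k01 k10 k11
      simp only [Matrix.sub_apply] at l00 l01 l10 l11
      have ht1 : 0 ≤ x1 / Real.sqrt 2 := div_nonneg hx1 (Real.sqrt_nonneg 2)
      have ht2 : 0 ≤ x2 / Real.sqrt 2 := div_nonneg hx2 (Real.sqrt_nonneg 2)
      intro i j
      fin_cases i <;> fin_cases j <;>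
        · simp only [Q, A, Cm, J2, Matrix.smul_apply, Matrix.add_apply, Matrix.sub_apply,
            Matrix.mul_apply, Fin.sum_univ_two, smul_eq_mul,
            Matrix.cons_val_zero, Matrix.cons_val_one, Matrix.cons_val_two,
            Matrix.cons_val_three, Matrix.cons_val_four, Matrix.head_cons,
            Matrix.vecHead, Matrix.vecTail, Function.comp_apply,
            Matrix.of_apply, Matrix.cons_val', Matrix.cons_val_succ,
            Fin.mk_zero, Fin.mk_one]
          norm_num
          first
            | exact hp | exact ht1 | exact ht2
            | linarith
end

section
/- Let 1 ≥ λ2 ≥ λ3 > 0 > λ4 ≥ λ5 ≥ −1 be real numbers such that 1 + λ2 + λ3 + λ4 + λ5 > 0, 1 + λ2 + λ4 + λ5 < 0, and λ2·λ4 − λ3·λ5 − λ3 − λ5 ≥ −λ3·λ5/(1 + λ3 + λ5). Then there exist real numbers a ≥ 0 and b ≥ 0 such that a² + b² = λ2·λ4 − λ3·λ5 − λ3 − λ5 and (1 + λ3 + λ5)·b² − 2ab·√(−λ2·λ4) = −λ3·λ5. -/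
theorem stmt_17 (l2 l3 l4 l5 : ℝ)
    (h12 : 1 ≥ l2) (h23 : l2 ≥ l3) (h3 : l3 > 0) (h4 : 0 > l4) (h45 : l4 ≥ l5)
    (h5 : l5 ≥ -1)
    (hsum : 1 + l2 + l3 + l4 + l5 > 0)
    (hneg : 1 + l2 + l4 + l5 < 0)
    (hineq : l2 * l4 - l3 * l5 - l3 - l5 ≥ -(l3 * l5) / (1 + l3 + l5)) :
    ∃ a b : ℝ, a ≥ 0 ∧ b ≥ 0 ∧
      a ^ 2 + b ^ 2 = l2 * l4 - l3 * l5 - l3 - l5 ∧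
      (1 + l3 + l5) * b ^ 2 - 2 * a * b * Real.sqrt (-(l2 * l4)) = -(l3 * l5) := by
  set S : ℝ := l2 * l4 - l3 * l5 - l3 - l5 with hS
  have hc : (0:ℝ) < 1 + l3 + l5 := by nlinarith
  have hl35 : l3 * l5 < 0 := mul_neg_of_pos_of_neg h3 (by linarith)
  have hineq' : -(l3 * l5) ≤ (1 + l3 + l5) * S := by
    rw [ge_iff_le, div_le_iff₀ hc] at hineq
    linarith [hineq]
  have hSnn : 0 ≤ S := by nlinarith
  set K : ℝ := Real.sqrt (-(l2 * l4)) with hK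
  set g : ℝ → ℝ := fun t =>
    (1 + l3 + l5) * t - 2 * Real.sqrt (S - t) * Real.sqrt t * K + l3 * l5 with hg
  have hcont : ContinuousOn g (Set.Icc 0 S) := by
    apply Continuous.continuousOn
    fun_prop
  have hg0 : g 0 ≤ 0 := by
    simp only [hg]
    simp [Real.sqrt_zero]
    linarith
  have hgS : 0 ≤ g S := by
    simp only [hg]
    simp [Real.sqrt_zero]
    linarith
  have hmem : (0:ℝ) ∈ Set.Icc (g 0) (g S) := ⟨hg0, hgS⟩
  obtain ⟨t, ht, hgt⟩ := intermediate_value_Icc hSnn hcont hmem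
  obtain ⟨ht0, htS⟩ := ht
  refine ⟨Real.sqrt (S - t), Real.sqrt t, Real.sqrt_nonneg _, Real.sqrt_nonneg _, ?_, ?_⟩
  · rw [Real.sq_sqrt (by linarith), Real.sq_sqrt ht0]
    ring
  · rw [Real.sq_sqrt ht0]
    simp only [hg] at hgt
    linarith [hgt]
end
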